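/- arXiv:1808.02126 — 3 statements merged into one kernel-verified Lean document; each statement's English description precedes it below -/
import Mathlib

section
/- Assume there exists a closed subspace Z ⊆ X such that T_Z is an invertible operator, and there exist M, a > 0 with ‖A(m,n)x‖_m ≤ M(m/n)^a‖x‖_n for all m ≥ n and x ∈ X. Then (A_m)_{m∈ℕ} admits a polynomial dichotomy with respect to the sequence of norms ‖·‖_m. -/
open scoped BigOperators

variable {X : Type*} [NormedAddCommGroup X] [NormedSpace ℝ X]

/-- The cocycle generated by a sequence of bounded operators:
`coc A n m = 𝓐(m,n) = A_{m-1} ⋯ A_n` for `m > n`, and `= Id` for `m ≤ n`. -/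
def coc (A : ℕ → X →L[ℝ] X) (n : ℕ) : ℕ → X →L[ℝ] X
  | 0 => 1
  | m + 1 => if n ≤ m then (A m).comp (coc A n m) else 1

/-- The formal difference operator: `(T x)_1 = 0` and
`(T x)_{m+1} = (m+1)(x_{m+1} - A_m x_m)` for `m ≥ 1`. -/
noncomputable def TOp (A : ℕ → X →L[ℝ] X) (x : ℕ → X) : ℕ → X :=
  fun m => if m ≤ 1 then 0 else (m : ℝ) • (x m - A (m - 1) (x (m - 1)))

/-- `N` is a family (indexed by `m ≥ 1`) of norms on `X`, each equivalent to `‖·‖`. -/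
def NormFamily (N : ℕ → X → ℝ) : Prop :=
  ∀ m, 1 ≤ m →
    (∀ x y : X, N m (x + y) ≤ N m x + N m y) ∧
    (∀ (c : ℝ) (x : X), N m (c • x) = |c| * N m x) ∧
    (∃ c C : ℝ, 0 < c ∧ ∀ x : X, c * ‖x‖ ≤ N m x ∧ N m x ≤ C * ‖x‖)

/-- Membership in `Y`: `sup_{m ≥ 1} ‖x_m‖_m < ∞`. -/
def MemY (N : ℕ → X → ℝ) (x : ℕ → X) : Prop :=
  ∃ S : ℝ, ∀ m, 1 ≤ m → N m (x m) ≤ S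

/-- Membership in `Y₀ = Y_{{0}}`: bounded and `x_1 = 0`. -/
def MemY0 (N : ℕ → X → ℝ) (x : ℕ → X) : Prop := x 1 = 0 ∧ MemY N x

/-- Membership in `Y_Z`: bounded and `x_1 ∈ Z`. -/
def MemYZ (N : ℕ → X → ℝ) (Z : Set X) (x : ℕ → X) : Prop := x 1 ∈ Z ∧ MemY N x

/-- Membership in the domain `𝒟(T_Z)`: `x ∈ Y_Z` and
`sup_{m ≥ 1} (m+1)‖x_{m+1} - A_m x_m‖_{m+1} < ∞`. -/
def MemD (A : ℕ → X →L[ℝ] X) (N : ℕ → X → ℝ) (Z : Set X) (x : ℕ → X) : Prop :=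
  MemYZ N Z x ∧ MemY N (TOp A x)

/-- Polynomial dichotomy (with given projections and constants) with respect to the
sequence of norms `N`.  The bound along the unstable direction is stated in the
equivalent "forward" form: `‖u‖_m ≤ D (m/n)^λ ‖𝓐(n,m)u‖_n` for `u ∈ Ker P_m`, `m ≤ n`. -/
def PolyDichWith (A : ℕ → X →L[ℝ] X) (N : ℕ → X → ℝ) (P : ℕ → X →L[ℝ] X)
    (D lam : ℝ) : Prop :=
  (∀ m, 1 ≤ m → (P m).comp (P m) = P m) ∧
  (∀ m, 1 ≤ m → (A m).comp (P m) = (P (m + 1)).comp (A m)) ∧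
  (∀ m, 1 ≤ m → ∀ y, P (m + 1) y = 0 → ∃! x, P m x = 0 ∧ A m x = y) ∧
  (∀ m n, 1 ≤ n → n ≤ m → ∀ x : X,
      N m (coc A n m (P n x)) ≤ D * (((m : ℝ) / (n : ℝ)) ^ (-lam)) * N n x) ∧
  (∀ m n, 1 ≤ m → m ≤ n → ∀ u : X, P m u = 0 →
      N m u ≤ D * (((m : ℝ) / (n : ℝ)) ^ lam) * N n (coc A m n u))

/-- `(A_m)` admits a polynomial dichotomy with respect to the sequence of norms `N`. -/
def PolyDich (A : ℕ → X →L[ℝ] X) (N : ℕ → X → ℝ) : Prop :=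
  ∃ (P : ℕ → X →L[ℝ] X) (D lam : ℝ), 0 < D ∧ 0 < lam ∧ PolyDichWith A N P D lam

/-- The stable space `X(n) = {x : sup_{m ≥ n} ‖𝓐(m,n)x‖_m < ∞}`. -/
def Xs (A : ℕ → X →L[ℝ] X) (N : ℕ → X → ℝ) (n : ℕ) : Set X :=
  {x : X | ∃ S : ℝ, ∀ m, n ≤ m → N m (coc A n m x) ≤ S}

/-- The unstable space `Z(n) = 𝓐(n,1) Z`. -/
def Zs (A : ℕ → X →L[ℝ] X) (Z : Set X) (n : ℕ) : Set X := coc A 1 n '' Z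

/-- `T_Z : 𝒟(T_Z) → Y₀` is invertible, with `κ` a bound for the norm of its inverse
(with respect to the graph norm on the domain). -/
def TInv (A : ℕ → X →L[ℝ] X) (N : ℕ → X → ℝ) (Z : Set X) (κ : ℝ) : Prop :=
  (∀ y, MemY0 N y → ∃ x, MemD A N Z x ∧ ∀ m, 1 ≤ m → TOp A x m = y m) ∧
  (∀ x x', MemD A N Z x → MemD A N Z x' →
      (∀ m, 1 ≤ m → TOp A x m = TOp A x' m) → ∀ m, 1 ≤ m → x m = x' m) ∧
  (∀ y x, MemY0 N y → MemD A N Z x → (∀ m, 1 ≤ m → TOp A x m = y m) →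
      ∀ S : ℝ, (∀ m, 1 ≤ m → N m (y m) ≤ S) → ∀ m, 1 ≤ m → N m (x m) ≤ κ * S)

/-- The uniform polynomial growth bound `‖𝓐(m,n)x‖_m ≤ M (m/n)^a ‖x‖_n` for `m ≥ n`. -/
def Grow (A : ℕ → X →L[ℝ] X) (N : ℕ → X → ℝ) (M a : ℝ) : Prop :=
  ∀ m n, 1 ≤ n → n ≤ m → ∀ x : X,
    N m (coc A n m x) ≤ M * (((m : ℝ) / (n : ℝ)) ^ a) * N n x


namespace Stmt13Aux

open Finset

/-! ### Cocycle algebra -/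

lemma coc_of_le (A : ℕ → X →L[ℝ] X) {n m : ℕ} (h : m ≤ n) : coc A n m = 1 := by
  cases m with
  | zero => rfl
  | succ k => simp only [coc, if_neg (Nat.not_le.2 (Nat.lt_of_succ_le h))]

lemma coc_self (A : ℕ → X →L[ℝ] X) (n : ℕ) : coc A n n = 1 := coc_of_le A le_rfl

lemma coc_succ (A : ℕ → X →L[ℝ] X) {n m : ℕ} (h : n ≤ m) :
    coc A n (m + 1) = (A m).comp (coc A n m) := by
  simp only [coc, if_pos h]

lemma coc_succ_apply (A : ℕ → X →L[ℝ] X) {n m : ℕ} (h : n ≤ m) (x : X) :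
    coc A n (m + 1) x = A m (coc A n m x) := by rw [coc_succ A h]; rfl

lemma coc_comp (A : ℕ → X →L[ℝ] X) {n k m : ℕ} (h1 : n ≤ k) (h2 : k ≤ m) (x : X) :
    coc A k m (coc A n k x) = coc A n m x := by
  induction m, h2 using Nat.le_induction with
  | base => rw [coc_self]; rfl
  | succ m hm ih =>
      rw [coc_succ_apply A hm, coc_succ_apply A (le_trans h1 hm), ih]

lemma coc_shift (A : ℕ → X →L[ℝ] X) {m k : ℕ} (h : m + 1 ≤ k) (u : X) :
    coc A (m + 1) k (A m u) = coc A m k u := by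
  have := coc_comp A (Nat.le_succ m) h u
  rwa [coc_succ_apply A le_rfl, coc_self] at this
  
/-! ### Harmonic sums -/

noncomputable def G (n m : ℕ) : ℝ := ∑ k ∈ Finset.Ioc n m, (1 : ℝ) / k

lemma G_nonneg (n m : ℕ) : 0 ≤ G n m := by
  apply Finset.sum_nonneg; intro k _; positivity

lemma G_of_le {n m : ℕ} (h : m ≤ n) : G n m = 0 := by
  rw [G, Finset.Ioc_eq_empty (by omega), Finset.sum_empty]

lemma G_succ {n m : ℕ} (h : n ≤ m) : G n (m + 1) = G n m + 1 / (m + 1 : ℝ) := by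
  rw [G, G, Finset.sum_Ioc_succ_top (by omega)]
  push_cast; ring

lemma G_mono {n m m' : ℕ} (h : m ≤ m') : G n m ≤ G n m' := by
  apply Finset.sum_le_sum_of_subset_of_nonneg
  · exact Finset.Ioc_subset_Ioc le_rfl h
  · intro k _ _; positivity

lemma log_le_G {n m : ℕ} (h : n ≤ m) :
    Real.log ((m : ℝ) + 1) - Real.log ((n : ℝ) + 1) ≤ G n m := by
  induction m, h using Nat.le_induction with
  | base => rw [G_of_le le_rfl, sub_self]
  | succ m hm ih =>
      have hm1 : (0:ℝ) < (m : ℝ) + 1 := by positivity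
      have key : Real.log ((m : ℝ) + 1 + 1) - Real.log ((m : ℝ) + 1) ≤ 1 / ((m : ℝ) + 1) := by
        rw [← Real.log_div (by positivity) (by positivity)]
        have h2 : ((m : ℝ) + 1 + 1) / ((m : ℝ) + 1) - 1 = 1 / ((m:ℝ)+1) := by
          field_simp
          ring
        have := Real.log_le_sub_one_of_pos (x := ((m : ℝ) + 1 + 1) / ((m : ℝ) + 1)) (by positivity)
        linarith
      rw [G_succ hm]
      push_cast
      push_cast at ih
      linarith

lemma le_G {n m : ℕ} {c : ℝ} (hc : 0 ≤ c) (h : Real.exp c * ((n : ℝ) + 1) ≤ (m : ℝ) + 1) :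
    c ≤ G n m := by
  have h1 : (1:ℝ) ≤ Real.exp c := Real.one_le_exp hc
  have hnm : n ≤ m := by
    have h2 : ((n : ℝ) + 1) ≤ (m : ℝ) + 1 := le_trans (by nlinarith [Real.exp_pos c]) h
    have h3 : (n : ℝ) ≤ (m : ℝ) := by linarith
    exact_mod_cast h3
  have hn1 : (0:ℝ) < (n : ℝ) + 1 := by positivity
  have hlog : c ≤ Real.log ((m : ℝ) + 1) - Real.log ((n : ℝ) + 1) := by
    have : Real.log (Real.exp c * ((n : ℝ) + 1)) ≤ Real.log ((m : ℝ) + 1) :=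
      Real.log_le_log (by positivity) h
    rw [Real.log_mul (by positivity) (by positivity), Real.log_exp] at this
    linarith
  exact le_trans hlog (log_le_G hnm)


/-! ### Norm family facts -/

variable {N : ℕ → X → ℝ}

lemma n_add (hN : NormFamily N) {m : ℕ} (hm : 1 ≤ m) (x y : X) :
    N m (x + y) ≤ N m x + N m y := (hN m hm).1 x y

lemma n_smul (hN : NormFamily N) {m : ℕ} (hm : 1 ≤ m) (c : ℝ) (x : X) :
    N m (c • x) = |c| * N m x := (hN m hm).2.1 c x

lemma n_nonneg (hN : NormFamily N) {m : ℕ} (hm : 1 ≤ m) (x : X) : 0 ≤ N m x := by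
  obtain ⟨c, C, hc, h⟩ := (hN m hm).2.2
  exact le_trans (by positivity) (h x).1

lemma n_zero (hN : NormFamily N) {m : ℕ} (hm : 1 ≤ m) : N m (0 : X) = 0 := by
  have h := n_smul hN hm 0 (0 : X)
  simpa using h

lemma n_eq_zero (hN : NormFamily N) {m : ℕ} (hm : 1 ≤ m) {x : X} (h : N m x = 0) :
    x = 0 := by
  obtain ⟨c, C, hc, hb⟩ := (hN m hm).2.2
  have h1 := (hb x).1
  have h2 : ‖x‖ ≤ 0 := by nlinarith [norm_nonneg x]
  simpa using le_antisymm h2 (norm_nonneg x)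

lemma n_neg (hN : NormFamily N) {m : ℕ} (hm : 1 ≤ m) (x : X) : N m (-x) = N m x := by
  have h := n_smul hN hm (-1) x
  simpa using h

/-! ### TOp computations -/

lemma TOp_one (A : ℕ → X →L[ℝ] X) (x : ℕ → X) : TOp A x 1 = 0 := by
  simp [TOp]

lemma TOp_of_two_le (A : ℕ → X →L[ℝ] X) (x : ℕ → X) {k : ℕ} (hk : 2 ≤ k) :
    TOp A x k = (k : ℝ) • (x k - A (k - 1) (x (k - 1))) := by
  rw [TOp, if_neg (by omega)]

lemma TOp_add (A : ℕ → X →L[ℝ] X) (x y : ℕ → X) (k : ℕ) :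
    TOp A (fun j => x j + y j) k = TOp A x k + TOp A y k := by
  unfold TOp
  split
  · simp
  · rw [← smul_add]
    congr 1
    rw [map_add]
    exact (sub_add_sub_comm _ _ _ _).symm

/-- Test sequences: coefficient times cocycle trajectory. -/
noncomputable def tseq (A : ℕ → X →L[ℝ] X) (b : ℕ) (u : X) (c : ℕ → ℝ) : ℕ → X :=
  fun j => c j • coc A b j u

lemma TOp_tseq (A : ℕ → X →L[ℝ] X) (b : ℕ) (u : X) (c : ℕ → ℝ) {k : ℕ}
    (hk : 2 ≤ k) (hbk : b ≤ k - 1) :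
    TOp A (tseq A b u c) k = ((k : ℝ) * (c k - c (k - 1))) • coc A b k u := by
  rw [TOp_of_two_le A _ hk]
  have h1 : coc A b k u = A (k - 1) (coc A b (k - 1) u) := by
    have h := coc_succ_apply A hbk u
    have hk1 : k - 1 + 1 = k := by omega
    rwa [hk1] at h
  simp only [tseq, map_smul, smul_smul]
  rw [← h1, ← sub_smul, smul_smul]

lemma TOp_tseq_zero (A : ℕ → X →L[ℝ] X) (b : ℕ) (u : X) (c : ℕ → ℝ) {k : ℕ}
    (hk : 2 ≤ k) (h1 : c k = 0) (h2 : c (k - 1) = 0) :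
    TOp A (tseq A b u c) k = 0 := by
  rw [TOp_of_two_le A _ hk]
  simp [tseq, h1, h2]


/-! ### Core test-sequence estimates -/

section Tests

variable {Z : Submodule ℝ X} {A : ℕ → X →L[ℝ] X} {κ M a : ℝ}

/-- Stable-direction basic estimate. -/
lemma stable_test (hN : NormFamily N) (hinv : TInv A N (Z : Set X) κ)
    {n : ℕ} (hn : 1 ≤ n) {p : X} {s : ℝ} (hs0 : 0 ≤ s)
    (hs : ∀ k, n ≤ k → N k (coc A n k p) ≤ s) {mb : ℕ} (hmb : n ≤ mb) :
    G n mb * N mb (coc A n mb p) ≤ κ * s := by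
  set c : ℕ → ℝ := fun k => G n (min k mb) with hcdef
  set x := tseq A n p c with hx
  set y : ℕ → X := fun k => if n + 1 ≤ k ∧ k ≤ mb then coc A n k p else 0 with hydef
  have hcd : ∀ k, c k = G n (min k mb) := fun _ => rfl
  have hyd : ∀ k, y k = if n + 1 ≤ k ∧ k ≤ mb then coc A n k p else 0 := fun _ => rfl
  have hxd : ∀ k, x k = c k • coc A n k p := fun _ => rfl
  have hczero : ∀ k, k ≤ n → c k = 0 := fun k hk => by
    rw [hcd k]; exact G_of_le (le_trans (min_le_left _ _) hk)
  have hcabs : ∀ k, |c k| ≤ G n mb := fun k => by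
    rw [hcd k, abs_of_nonneg (G_nonneg _ _)]; exact G_mono (min_le_right _ _)
  have hSy : ∀ k, 1 ≤ k → N k (y k) ≤ s := by
    intro k hk
    rw [hyd k]
    by_cases hw : n + 1 ≤ k ∧ k ≤ mb
    · rw [if_pos hw]; exact hs k (by omega)
    · rw [if_neg hw, n_zero hN hk]; exact hs0
  have heq : ∀ k, 1 ≤ k → TOp A x k = y k := by
    intro k hk
    by_cases hk1 : k = 1
    · subst hk1
      rw [TOp_one, hyd 1, if_neg (by omega)]
    have hk2 : 2 ≤ k := by omega
    by_cases hkn : k ≤ n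
    · rw [hx, TOp_tseq_zero A n p c hk2 (hczero k hkn) (hczero _ (by omega)), hyd k,
        if_neg (by omega)]
    · push_neg at hkn
      have hbk : n ≤ k - 1 := by omega
      rw [hx, TOp_tseq A n p c hk2 hbk, hyd k]
      by_cases hkmb : k ≤ mb
      · have e1 : min k mb = k := min_eq_left hkmb
        have e2 : min (k - 1) mb = k - 1 := min_eq_left (by omega)
        have e3 : c k - c (k - 1) = 1 / (k : ℝ) := by
          rw [hcd k, hcd (k - 1), e1, e2]
          have hg := G_succ (n := n) (m := k - 1) (by omega)
          have hk1' : k - 1 + 1 = k := by omega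
          rw [hk1'] at hg
          have hcast : ((k - 1 : ℕ) : ℝ) + 1 = (k : ℝ) := by
            have h5 : ((k - 1 : ℕ) : ℝ) = (k : ℝ) - 1 := by
              push_cast [Nat.cast_sub (by omega : 1 ≤ k)]; ring
            rw [h5]; ring
          rw [hg, hcast]; ring
        rw [e3, if_pos ⟨by omega, hkmb⟩]
        have h6 : (k : ℝ) * (1 / (k : ℝ)) = 1 := by
          have : (k : ℝ) ≠ 0 := by positivity
          field_simp
        rw [h6, one_smul]
      · have e3 : c k - c (k - 1) = 0 := by
          rw [hcd k, hcd (k - 1), min_eq_right (by omega), min_eq_right (by omega), sub_self]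
        rw [e3, if_neg (by omega)]
        simp
  have hxD : MemD A N (Z : Set X) x := by
    refine ⟨⟨?_, ?_⟩, ?_⟩
    · have h7 : x 1 = 0 := by rw [hxd 1, hczero 1 hn, zero_smul]
      rw [h7]; exact Submodule.zero_mem Z
    · refine ⟨G n mb * s, fun k hk => ?_⟩
      rw [hxd k, n_smul hN hk]
      by_cases hkn : n ≤ k
      · exact mul_le_mul (hcabs k) (hs k hkn) (n_nonneg hN hk _) (G_nonneg _ _)
      · rw [hczero k (by omega)]
        simp only [abs_zero, zero_mul]
        exact mul_nonneg (G_nonneg _ _) hs0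
    · exact ⟨s, fun k hk => by rw [heq k hk]; exact hSy k hk⟩
  have hy0 : MemY0 N y := ⟨by rw [hyd 1, if_neg (by omega)], ⟨s, hSy⟩⟩
  have hb := hinv.2.2 y x hy0 hxD heq s hSy mb (by omega)
  have hxmb : N mb (x mb) = G n mb * N mb (coc A n mb p) := by
    rw [hxd mb, n_smul hN (by omega), hcd mb, min_self, abs_of_nonneg (G_nonneg _ _)]
  rw [hxmb] at hb
  exact hb

/-- Unstable-direction basic estimate. -/
lemma unstable_test (hN : NormFamily N) (hinv : TInv A N (Z : Set X) κ)
    (hM : 0 < M) (ha : 0 < a) (hgrow : Grow A N M a)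
    {w : X} (hw : w ∈ Z) {m n nb : ℕ} (hm : 1 ≤ m) (hmn : m ≤ n) (hnnb : n ≤ nb)
    {B : ℝ} (hB0 : 0 ≤ B)
    (hB : ∀ k, n + 1 ≤ k → k ≤ nb → N k (coc A 1 k w) ≤ B) :
    G n nb * N m (coc A 1 m w) ≤ κ * B := by
  have hn : 1 ≤ n := le_trans hm hmn
  set c : ℕ → ℝ := fun k => G n (min (max k n) nb) - G n nb with hcdef
  set x := tseq A 1 w c with hx
  set y : ℕ → X := fun k => if n + 1 ≤ k ∧ k ≤ nb then coc A 1 k w else 0 with hydef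
  have hcd : ∀ k, c k = G n (min (max k n) nb) - G n nb := fun _ => rfl
  have hyd : ∀ k, y k = if n + 1 ≤ k ∧ k ≤ nb then coc A 1 k w else 0 := fun _ => rfl
  have hxd : ∀ k, x k = c k • coc A 1 k w := fun _ => rfl
  have hclow : ∀ k, k ≤ n → c k = -G n nb := by
    intro k hk
    rw [hcd k, max_eq_right hk, min_eq_left hnnb, G_of_le le_rfl]
    ring
  have hchigh : ∀ k, nb ≤ k → c k = 0 := by
    intro k hk
    rw [hcd k, max_eq_left (le_trans hnnb hk), min_eq_right hk, sub_self]
  have hcabs : ∀ k, |c k| ≤ G n nb := by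
    intro k
    have h1 : G n (min (max k n) nb) ≤ G n nb := G_mono (min_le_right _ _)
    have h2 : 0 ≤ G n (min (max k n) nb) := G_nonneg _ _
    rw [hcd k, abs_le]
    constructor <;> linarith
  have hSy : ∀ k, 1 ≤ k → N k (y k) ≤ B := by
    intro k hk
    rw [hyd k]
    by_cases hw2 : n + 1 ≤ k ∧ k ≤ nb
    · rw [if_pos hw2]; exact hB k hw2.1 hw2.2
    · rw [if_neg hw2, n_zero hN hk]; exact hB0
  have heq : ∀ k, 1 ≤ k → TOp A x k = y k := by
    intro k hk
    by_cases hk1 : k = 1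
    · subst hk1
      rw [TOp_one, hyd 1, if_neg (by omega)]
    have hk2 : 2 ≤ k := by omega
    rw [hx, TOp_tseq A 1 w c hk2 (by omega), hyd k]
    by_cases hkn : k ≤ n
    · rw [hclow k hkn, hclow (k - 1) (by omega), sub_self, if_neg (by omega)]
      simp
    · push_neg at hkn
      by_cases hknb : k ≤ nb
      · have e3 : c k - c (k - 1) = 1 / (k : ℝ) := by
          rw [hcd k, hcd (k - 1), max_eq_left (by omega : n ≤ k),
            min_eq_left hknb, max_eq_left (by omega : n ≤ k - 1),
            min_eq_left (by omega : k - 1 ≤ nb)]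
          have hg := G_succ (n := n) (m := k - 1) (by omega)
          have hk1' : k - 1 + 1 = k := by omega
          rw [hk1'] at hg
          have hcast : ((k - 1 : ℕ) : ℝ) + 1 = (k : ℝ) := by
            have h5 : ((k - 1 : ℕ) : ℝ) = (k : ℝ) - 1 := by
              push_cast [Nat.cast_sub (by omega : 1 ≤ k)]; ring
            rw [h5]; ring
          rw [hg, hcast]; ring
        rw [e3, if_pos ⟨by omega, hknb⟩]
        have h6 : (k : ℝ) * (1 / (k : ℝ)) = 1 := by
          have : (k : ℝ) ≠ 0 := by positivity
          field_simp
        rw [h6, one_smul]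
      · rw [hchigh k (by omega), hchigh (k - 1) (by omega), sub_self, if_neg (by omega)]
        simp
  have htraj : ∀ k, 1 ≤ k → k ≤ nb → N k (coc A 1 k w) ≤ M * (nb : ℝ) ^ a * N 1 w := by
    intro k hk hknb
    have h1 := hgrow k 1 le_rfl hk w
    simp only [Nat.cast_one, div_one] at h1
    have h2 : ((k : ℝ)) ^ a ≤ (nb : ℝ) ^ a := by
      apply Real.rpow_le_rpow (by positivity) _ (le_of_lt ha)
      exact_mod_cast hknb
    calc N k (coc A 1 k w) ≤ M * (k : ℝ) ^ a * N 1 w := h1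
      _ ≤ M * (nb : ℝ) ^ a * N 1 w := by
          apply mul_le_mul_of_nonneg_right _ (n_nonneg hN le_rfl w)
          exact mul_le_mul_of_nonneg_left h2 (le_of_lt hM)
  have hxD : MemD A N (Z : Set X) x := by
    refine ⟨⟨?_, ?_⟩, ?_⟩
    · have h7 : x 1 = c 1 • w := by
        rw [hxd 1, coc_self]; rfl
      rw [h7]; exact Submodule.smul_mem Z _ hw
    · refine ⟨G n nb * (M * (nb : ℝ) ^ a * N 1 w), fun k hk => ?_⟩
      rw [hxd k, n_smul hN hk]
      by_cases hknb : k ≤ nb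
      · exact mul_le_mul (hcabs k) (htraj k hk hknb) (n_nonneg hN hk _) (G_nonneg _ _)
      · rw [hchigh k (by omega)]
        simp only [abs_zero, zero_mul]
        have h0 : (0:ℝ) ≤ N 1 w := n_nonneg hN le_rfl w
        exact mul_nonneg (G_nonneg _ _)
          (mul_nonneg (mul_nonneg (le_of_lt hM) (Real.rpow_nonneg (by positivity) a)) h0)
    · exact ⟨B, fun k hk => by rw [heq k hk]; exact hSy k hk⟩
  have hy0 : MemY0 N y := ⟨by rw [hyd 1, if_neg (by omega)], ⟨B, hSy⟩⟩
  have hb := hinv.2.2 y x hy0 hxD heq B hSy m hm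
  have hxm : N m (x m) = G n nb * N m (coc A 1 m w) := by
    rw [hxd m, n_smul hN hm, hclow m hmn, abs_neg, abs_of_nonneg (G_nonneg _ _)]
  rw [hxm] at hb
  exact hb

end Tests

/-! ### Constants -/

noncomputable def Ks (κ M a : ℝ) : ℝ := 2 * M * (2 * Real.exp (2 * κ)) ^ a
noncomputable def Ku (κ M a : ℝ) : ℝ := κ * (M * (2 : ℝ) ^ a) / Real.log (3 / 2)
noncomputable def rs (κ M a : ℝ) : ℝ := 2 * Real.exp (2 * (κ * Ks κ M a))
noncomputable def ru (κ M a : ℝ) : ℝ := 2 * Real.exp (2 * (κ * Ku κ M a))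

lemma log32_pos : 0 < Real.log (3 / 2) := Real.log_pos (by norm_num)

lemma Ks_pos {κ M a : ℝ} (hM : 0 < M) : 0 < Ks κ M a := by
  unfold Ks
  have h1 : (0:ℝ) < 2 * Real.exp (2 * κ) := by positivity
  have := Real.rpow_pos_of_pos h1 a
  positivity

lemma Ku_pos {κ M a : ℝ} (hκ : 1 ≤ κ) (hM : 0 < M) : 0 < Ku κ M a := by
  unfold Ku
  exact div_pos (mul_pos (by linarith) (mul_pos hM (Real.rpow_pos_of_pos two_pos a))) log32_pos

lemma rs_ge_two {κ M a : ℝ} (hκ : 1 ≤ κ) (hM : 0 < M) : 2 ≤ rs κ M a := by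
  unfold rs
  have h1 : (0:ℝ) ≤ 2 * (κ * Ks κ M a) := by
    have := Ks_pos (κ := κ) (a := a) hM
    nlinarith
  nlinarith [Real.one_le_exp h1]

lemma ru_ge_two {κ M a : ℝ} (hκ : 1 ≤ κ) (hM : 0 < M) : 2 ≤ ru κ M a := by
  unfold ru
  have h1 : (0:ℝ) ≤ 2 * (κ * Ku κ M a) := by
    have := Ku_pos (κ := κ) (M := M) (a := a) hκ hM
    nlinarith
  nlinarith [Real.one_le_exp h1]

/-- Conversion from geometric halving to a polynomial bound. -/
lemma geom_to_poly {R t : ℝ} (hR : 2 ≤ R) (ht : 1 ≤ t) :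
    ∃ j : ℕ, R ^ j ≤ t ∧ ((1:ℝ)/2) ^ j ≤ 2 * t ^ (-(Real.log 2 / Real.log R)) := by
  have hR1 : (1:ℝ) < R := by linarith
  have hR0 : (0:ℝ) < R := by linarith
  have hlogR : 0 < Real.log R := Real.log_pos hR1
  have ht0 : 0 < t := by linarith
  have hlogt : 0 ≤ Real.log t := Real.log_nonneg ht
  set lam := Real.log 2 / Real.log R with hlam
  have hlam0 : 0 ≤ lam := by
    apply div_nonneg (Real.log_nonneg (by norm_num)) hlogR.le
  refine ⟨⌊Real.log t / Real.log R⌋₊, ?_, ?_⟩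
  · have h1 : (⌊Real.log t / Real.log R⌋₊ : ℝ) ≤ Real.log t / Real.log R :=
      Nat.floor_le (by positivity)
    have h2 : (⌊Real.log t / Real.log R⌋₊ : ℝ) * Real.log R ≤ Real.log t := by
      rw [← le_div_iff₀ hlogR]; exact h1
    have e1 : R ^ (⌊Real.log t / Real.log R⌋₊ : ℕ)
        = Real.exp (Real.log R * (⌊Real.log t / Real.log R⌋₊ : ℝ)) := by
      rw [← Real.rpow_natCast R, Real.rpow_def_of_pos hR0]
    rw [e1]
    calc Real.exp (Real.log R * (⌊Real.log t / Real.log R⌋₊ : ℝ))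
        ≤ Real.exp (Real.log t) := Real.exp_le_exp.2 (by linarith [h2])
      _ = t := Real.exp_log ht0
  · set j := ⌊Real.log t / Real.log R⌋₊ with hj
    have h3 : Real.log t < ((j : ℝ) + 1) * Real.log R := by
      have h := Nat.lt_floor_add_one (Real.log t / Real.log R)
      rw [← hj, div_lt_iff₀ hlogR] at h
      exact h
    have h4 : t ^ (-lam) = Real.exp (Real.log t * (-lam)) := Real.rpow_def_of_pos ht0 _
    have h5 : lam * Real.log R = Real.log 2 := div_mul_cancel₀ _ (ne_of_gt hlogR)
    have h6 : Real.log t * (-lam) ≥ -(((j:ℝ) + 1) * Real.log 2) := by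
      have : lam * Real.log t ≤ lam * (((j:ℝ)+1) * Real.log R) :=
        mul_le_mul_of_nonneg_left h3.le hlam0
      nlinarith [this, h5]
    have h7 : Real.exp (-(((j:ℝ) + 1) * Real.log 2)) = ((1:ℝ)/2) ^ (j + 1) := by
      have : -(((j:ℝ) + 1) * Real.log 2) = ((j + 1 : ℕ) : ℝ) * (-Real.log 2) := by
        push_cast; ring
      rw [this, Real.exp_nat_mul, Real.exp_neg, Real.exp_log two_pos]
      norm_num
    have h8 : ((1:ℝ)/2) ^ (j + 1) ≤ t ^ (-lam) := by
      rw [h4, ← h7]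
      exact Real.exp_le_exp.2 h6
    have : ((1:ℝ)/2) ^ (j+1) = (1/2) * (1/2)^j := by ring
    nlinarith [h8]

/-! ### Homogeneous solutions -/

section Boot

variable {Z : Submodule ℝ X} {A : ℕ → X →L[ℝ] X} {κ M a : ℝ}

/-- A bounded homogeneous solution starting in `Z` vanishes. -/
lemma homog_zero (hN : NormFamily N) (hinv : TInv A N (Z : Set X) κ)
    {w : X} (hw : w ∈ Z) {S : ℝ} (h : ∀ k, 1 ≤ k → N k (coc A 1 k w) ≤ S) :
    ∀ k, 1 ≤ k → coc A 1 k w = 0 := by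
  set x : ℕ → X := fun k => coc A 1 k w with hxdef
  have hxd : ∀ k, x k = coc A 1 k w := fun _ => rfl
  have hTx : ∀ k, TOp A x k = 0 := by
    intro k
    by_cases hk : k ≤ 1
    · rw [TOp, if_pos hk]
    · push_neg at hk
      rw [TOp_of_two_le A x hk]
      have h1 : x k = A (k - 1) (x (k - 1)) := by
        rw [hxd, hxd]
        have := coc_succ_apply A (n := 1) (m := k - 1) (by omega) w
        have hk1 : k - 1 + 1 = k := by omega
        rwa [hk1] at this
      rw [h1, sub_self, smul_zero]
  have hxD : MemD A N (Z : Set X) x := by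
    refine ⟨⟨?_, ⟨S, fun k hk => h k hk⟩⟩, ⟨0, fun k hk => ?_⟩⟩
    · have : x 1 = w := by rw [hxd, coc_self]; rfl
      rw [this]; exact hw
    · rw [hTx k, n_zero hN hk]
  have hzD : MemD A N (Z : Set X) (fun _ => (0 : X)) := by
    refine ⟨⟨Submodule.zero_mem Z, ⟨0, fun k hk => by rw [n_zero hN hk]⟩⟩,
      ⟨0, fun k hk => ?_⟩⟩
    have : TOp A (fun _ => (0 : X)) k = 0 := by
      by_cases hk1 : k ≤ 1
      · rw [TOp, if_pos hk1]
      · rw [TOp, if_neg hk1, map_zero, sub_zero, smul_zero]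
    rw [this, n_zero hN hk]
  have heq : ∀ k, 1 ≤ k → TOp A x k = TOp A (fun _ => (0:X)) k := by
    intro k hk
    rw [hTx k]
    by_cases hk1 : k ≤ 1
    · rw [TOp, if_pos hk1]
    · rw [TOp, if_neg hk1, map_zero, sub_zero, smul_zero]
  intro k hk
  exact hinv.2.1 x (fun _ => (0:X)) hxD hzD heq k hk

/-! ### Stable bootstrap -/

lemma stable_uniform (hN : NormFamily N) (hκ : 1 ≤ κ) (hinv : TInv A N (Z : Set X) κ)
    (hM : 0 < M) (ha : 0 < a) (hgrow : Grow A N M a)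
    {n : ℕ} (hn : 1 ≤ n) {p : X} {s₀ : ℝ}
    (hs₀ : ∀ k, n ≤ k → N k (coc A n k p) ≤ s₀) :
    ∀ m, n ≤ m → N m (coc A n m p) ≤ Ks κ M a * N n p := by
  have hκ0 : (0:ℝ) < κ := by linarith
  have hNp : 0 ≤ N n p := n_nonneg hN hn p
  have hs₀0 : 0 ≤ s₀ := by
    have := hs₀ n le_rfl
    rw [coc_self] at this
    exact le_trans hNp this
  set B := M * (2 * Real.exp (2 * κ)) ^ a * N n p with hB
  have hB0 : 0 ≤ B := by
    rw [hB]
    have h1 : (0:ℝ) < 2 * Real.exp (2 * κ) := by positivity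
    exact mul_nonneg (mul_nonneg hM.le (Real.rpow_pos_of_pos h1 a).le) hNp
  have key : ∀ s', 0 ≤ s' → (∀ k, n ≤ k → N k (coc A n k p) ≤ s') →
      ∀ m, n ≤ m → N m (coc A n m p) ≤ B + s' / 2 := by
    intro s' hs'0 hs' m hm
    have hn0 : (0:ℝ) < (n:ℝ) := by exact_mod_cast hn
    by_cases hcase : (m : ℝ) ≤ 2 * Real.exp (2 * κ) * n
    · have h1 := hgrow m n hn hm p
      have h2 : ((m:ℝ)/(n:ℝ)) ^ a ≤ (2 * Real.exp (2 * κ)) ^ a := by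
        apply Real.rpow_le_rpow (by positivity) _ ha.le
        rw [div_le_iff₀ hn0]
        exact hcase
      have h3 : N m (coc A n m p) ≤ B := by
        rw [hB]
        calc N m (coc A n m p) ≤ M * ((m:ℝ)/(n:ℝ)) ^ a * N n p := h1
          _ ≤ M * (2 * Real.exp (2 * κ)) ^ a * N n p :=
            mul_le_mul_of_nonneg_right (mul_le_mul_of_nonneg_left h2 hM.le) hNp
      linarith
    · push_neg at hcase
      have hn1 : (1:ℝ) ≤ (n:ℝ) := by exact_mod_cast hn
      have hG : 2 * κ ≤ G n m := by
        apply le_G (by linarith)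
        nlinarith [Real.exp_pos (2 * κ)]
      have htest := stable_test hN hinv hn hs'0 hs' hm
      have hΦ0 : 0 ≤ N m (coc A n m p) := n_nonneg hN (by omega) _
      have h3 : 2 * κ * N m (coc A n m p) ≤ κ * s' := by
        nlinarith [htest, hG, hΦ0]
      have h4 : κ * (2 * N m (coc A n m p)) ≤ κ * s' := by linarith
      have h5 : 2 * N m (coc A n m p) ≤ s' := le_of_mul_le_mul_left h4 hκ0
      linarith
  have iter : ∀ j : ℕ, ∀ m, n ≤ m →
      N m (coc A n m p) ≤ 2 * B + (1/2:ℝ)^j * s₀ := by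
    intro j
    induction j with
    | zero =>
        intro m hm
        have := hs₀ m hm
        simpa using by linarith [this, hB0] 
    | succ j ih =>
        intro m hm
        have hs'0 : (0:ℝ) ≤ 2 * B + (1/2:ℝ)^j * s₀ := by
          have : (0:ℝ) ≤ (1/2:ℝ)^j := by positivity
          nlinarith
        have h5 := key (2 * B + (1/2:ℝ)^j * s₀) hs'0 ih m hm
        calc N m (coc A n m p) ≤ B + (2 * B + (1/2:ℝ)^j * s₀) / 2 := h5
          _ = 2 * B + (1/2:ℝ)^(j+1) * s₀ := by ring
  intro m hm
  have hlim : ∀ ε, 0 < ε → N m (coc A n m p) ≤ 2 * B + ε := by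
    intro ε hε
    obtain ⟨j, hj⟩ := exists_pow_lt_of_lt_one
      (div_pos hε (by linarith : (0:ℝ) < s₀ + 1)) (by norm_num : (1/2:ℝ) < 1)
    have h7 : (1/2:ℝ)^j * (s₀ + 1) < ε := by
      rw [← lt_div_iff₀ (by linarith : (0:ℝ) < s₀ + 1)]
      exact hj
    have h8 : (1/2:ℝ)^j * s₀ ≤ (1/2:ℝ)^j * (s₀ + 1) := by
      have : (0:ℝ) ≤ (1/2:ℝ)^j := by positivity
      nlinarith
    linarith [iter j m hm]
  have hfin : N m (coc A n m p) ≤ 2 * B :=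
    le_of_forall_pos_le_add hlim
  calc N m (coc A n m p) ≤ 2 * B := hfin
    _ = Ks κ M a * N n p := by rw [hB, Ks]; ring

lemma stable_halving (hN : NormFamily N) (hκ : 1 ≤ κ) (hinv : TInv A N (Z : Set X) κ)
    (hM : 0 < M) (ha : 0 < a) (hgrow : Grow A N M a)
    {n : ℕ} (hn : 1 ≤ n) {p : X} {s₀ : ℝ}
    (hs₀ : ∀ k, n ≤ k → N k (coc A n k p) ≤ s₀)
    {m₀ m : ℕ} (hm₀ : n ≤ m₀) (hm : rs κ M a * m₀ ≤ (m : ℝ)) :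
    N m (coc A n m p) ≤ (1/2) * N m₀ (coc A n m₀ p) := by
  have hκ0 : (0:ℝ) < κ := by linarith
  have hKs := Ks_pos (κ := κ) (a := a) hM
  have hm₀1 : 1 ≤ m₀ := le_trans hn hm₀
  have hm₀R : (1:ℝ) ≤ (m₀:ℝ) := by exact_mod_cast hm₀1
  have hrs2 := rs_ge_two (κ := κ) (M := M) (a := a) hκ hM
  have hm₀m : m₀ ≤ m := by
    have h1 : (m₀:ℝ) ≤ (m:ℝ) := by nlinarith
    exact_mod_cast h1
  set p₀ := coc A n m₀ p with hp₀
  have hcomp : ∀ k, m₀ ≤ k → coc A m₀ k p₀ = coc A n k p := by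
    intro k hk
    rw [hp₀]
    exact coc_comp A hm₀ hk p
  have htraj : ∀ k, m₀ ≤ k → N k (coc A m₀ k p₀) ≤ s₀ := by
    intro k hk
    rw [hcomp k hk]
    exact hs₀ k (le_trans hm₀ hk)
  have huni := stable_uniform hN hκ hinv hM ha hgrow hm₀1 htraj
  have hs'0 : 0 ≤ Ks κ M a * N m₀ p₀ :=
    mul_nonneg hKs.le (n_nonneg hN hm₀1 _)
  have htest := stable_test hN hinv hm₀1 hs'0 huni hm₀m
  rw [hcomp m hm₀m] at htest
  have hG : 2 * (κ * Ks κ M a) ≤ G m₀ m := by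
    apply le_G (by nlinarith)
    rw [rs] at hm
    nlinarith [Real.exp_pos (2 * (κ * Ks κ M a))]
  have hΦ0 : 0 ≤ N m (coc A n m p) := n_nonneg hN (by omega) _
  have h3 : 2 * (κ * Ks κ M a) * N m (coc A n m p) ≤ κ * (Ks κ M a * N m₀ p₀) := by
    nlinarith [htest, hG, hΦ0]
  have h4 : (κ * Ks κ M a) * (2 * N m (coc A n m p)) ≤
      (κ * Ks κ M a) * N m₀ p₀ := by nlinarith
  have h5 : 2 * N m (coc A n m p) ≤ N m₀ p₀ :=
    le_of_mul_le_mul_left h4 (by positivity)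
  rw [hp₀] at h5
  linarith

lemma stable_geom (hN : NormFamily N) (hκ : 1 ≤ κ) (hinv : TInv A N (Z : Set X) κ)
    (hM : 0 < M) (ha : 0 < a) (hgrow : Grow A N M a)
    {n : ℕ} (hn : 1 ≤ n) {p : X} {s₀ : ℝ}
    (hs₀ : ∀ k, n ≤ k → N k (coc A n k p) ≤ s₀) :
    ∀ j : ℕ, ∀ m, n ≤ m → (2 * rs κ M a)^j * (n:ℝ) ≤ (m:ℝ) →
      N m (coc A n m p) ≤ (1/2:ℝ)^j * (Ks κ M a * N n p) := by
  have hrs2 := rs_ge_two (κ := κ) (M := M) (a := a) hκ hM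
  have hrs0 : (0:ℝ) < rs κ M a := by linarith
  have hnR : (1:ℝ) ≤ (n:ℝ) := by exact_mod_cast hn
  intro j
  induction j with
  | zero =>
      intro m hm _
      simpa using stable_uniform hN hκ hinv hM ha hgrow hn hs₀ m hm
  | succ j ih =>
      intro m hm hmge
      have hpow1 : (1:ℝ) ≤ (2 * rs κ M a)^j := one_le_pow₀ (by linarith)
      set m₁ := ⌈(2 * rs κ M a)^j * (n:ℝ)⌉₊ with hm₁def
      have hx0 : (0:ℝ) ≤ (2 * rs κ M a)^j * (n:ℝ) := by nlinarith
      have hceil : (2 * rs κ M a)^j * (n:ℝ) ≤ (m₁:ℝ) := Nat.le_ceil _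
      have hceil2 : (m₁:ℝ) ≤ 2 * ((2 * rs κ M a)^j * (n:ℝ)) := by
        have h1 : (m₁:ℝ) < (2 * rs κ M a)^j * (n:ℝ) + 1 := by
          exact_mod_cast Nat.ceil_lt_add_one hx0
        nlinarith
      have hnm₁ : n ≤ m₁ := by
        have : (n:ℝ) ≤ (m₁:ℝ) := le_trans (by nlinarith) hceil
        exact_mod_cast this
      have hm₁m : rs κ M a * (m₁:ℝ) ≤ (m:ℝ) := by
        have : (2 * rs κ M a)^(j+1) * (n:ℝ) = rs κ M a * (2 * ((2 * rs κ M a)^j * (n:ℝ))) := by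
          ring
        nlinarith [hmge, hceil2, hrs0]
      have hv1 := ih m₁ hnm₁ hceil
      have hv2 := stable_halving hN hκ hinv hM ha hgrow hn hs₀ hnm₁ hm₁m
      calc N m (coc A n m p) ≤ (1/2) * N m₁ (coc A n m₁ p) := hv2
        _ ≤ (1/2) * ((1/2:ℝ)^j * (Ks κ M a * N n p)) := by linarith [hv1]
        _ = (1/2:ℝ)^(j+1) * (Ks κ M a * N n p) := by ring

/-- Final stable polynomial decay. -/
lemma stable_decay (hN : NormFamily N) (hκ : 1 ≤ κ) (hinv : TInv A N (Z : Set X) κ)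
    (hM : 0 < M) (ha : 0 < a) (hgrow : Grow A N M a)
    {n : ℕ} (hn : 1 ≤ n) {p : X} (hp : p ∈ Xs A N n) {m : ℕ} (hm : n ≤ m) :
    N m (coc A n m p) ≤ (2 * Ks κ M a) *
      ((m:ℝ)/(n:ℝ)) ^ (-(Real.log 2 / Real.log (2 * rs κ M a))) * N n p := by
  obtain ⟨s₀, hs₀⟩ := hp
  have hrs2 := rs_ge_two (κ := κ) (M := M) (a := a) hκ hM
  have hR : (2:ℝ) ≤ 2 * rs κ M a := by linarith
  have hn0 : (0:ℝ) < (n:ℝ) := by exact_mod_cast hn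
  have ht : (1:ℝ) ≤ (m:ℝ)/(n:ℝ) := by
    rw [le_div_iff₀ hn0]
    have : (n:ℝ) ≤ (m:ℝ) := by exact_mod_cast hm
    linarith
  obtain ⟨j, hj1, hj2⟩ := geom_to_poly hR ht
  have hge : (2 * rs κ M a)^j * (n:ℝ) ≤ (m:ℝ) := by
    rw [← le_div_iff₀ hn0] at *
    exact hj1
  have h1 := stable_geom hN hκ hinv hM ha hgrow hn (fun k hk => hs₀ k hk) j m hm hge
  have hKsN : 0 ≤ Ks κ M a * N n p :=
    mul_nonneg (Ks_pos (κ := κ) (a := a) hM).le (n_nonneg hN hn p)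
  calc N m (coc A n m p) ≤ (1/2:ℝ)^j * (Ks κ M a * N n p) := h1
    _ ≤ (2 * ((m:ℝ)/(n:ℝ)) ^ (-(Real.log 2 / Real.log (2 * rs κ M a)))) *
        (Ks κ M a * N n p) := mul_le_mul_of_nonneg_right hj2 hKsN
    _ = (2 * Ks κ M a) * ((m:ℝ)/(n:ℝ)) ^ (-(Real.log 2 / Real.log (2 * rs κ M a))) *
        N n p := by ring

/-! ### Unstable bootstrap -/

lemma unstable_uniform (hN : NormFamily N) (hκ : 1 ≤ κ) (hinv : TInv A N (Z : Set X) κ)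
    (hM : 0 < M) (ha : 0 < a) (hgrow : Grow A N M a)
    {w : X} (hw : w ∈ Z) {m n : ℕ} (hm : 1 ≤ m) (hmn : m ≤ n) :
    N m (coc A 1 m w) ≤ Ku κ M a * N n (coc A 1 n w) := by
  have hκ0 : (0:ℝ) < κ := by linarith
  have hn : 1 ≤ n := le_trans hm hmn
  have hn0 : (0:ℝ) < (n:ℝ) := by exact_mod_cast hn
  have hψn : 0 ≤ N n (coc A 1 n w) := n_nonneg hN hn _
  have hB : ∀ k, n + 1 ≤ k → k ≤ 2*n →
      N k (coc A 1 k w) ≤ M * (2:ℝ)^a * N n (coc A 1 n w) := by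
    intro k hk1 hk2
    have hcc : coc A n k (coc A 1 n w) = coc A 1 k w := coc_comp A hn (by omega) w
    have h1 := hgrow k n hn (by omega) (coc A 1 n w)
    rw [hcc] at h1
    have h2 : ((k:ℝ)/(n:ℝ)) ^ a ≤ (2:ℝ)^a := by
      apply Real.rpow_le_rpow (by positivity) _ ha.le
      rw [div_le_iff₀ hn0]
      have : (k:ℝ) ≤ 2 * (n:ℝ) := by exact_mod_cast hk2
      linarith
    calc N k (coc A 1 k w) ≤ M * ((k:ℝ)/(n:ℝ)) ^ a * N n (coc A 1 n w) := h1
      _ ≤ M * (2:ℝ)^a * N n (coc A 1 n w) :=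
        mul_le_mul_of_nonneg_right (mul_le_mul_of_nonneg_left h2 hM.le) hψn
  have hB0 : 0 ≤ M * (2:ℝ)^a * N n (coc A 1 n w) :=
    mul_nonneg (mul_nonneg hM.le (Real.rpow_pos_of_pos two_pos a).le) hψn
  have htest := unstable_test hN hinv hM ha hgrow hw hm hmn
    (by omega : n ≤ 2*n) hB0 hB
  have hG : Real.log (3/2) ≤ G n (2*n) := by
    apply le_G log32_pos.le
    rw [Real.exp_log (by norm_num : (0:ℝ) < 3/2)]
    have hn1 : (1:ℝ) ≤ (n:ℝ) := by exact_mod_cast hn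
    push_cast
    nlinarith
  have hψm : 0 ≤ N m (coc A 1 m w) := n_nonneg hN hm _
  have h3 : Real.log (3/2) * N m (coc A 1 m w) ≤
      κ * (M * (2:ℝ)^a * N n (coc A 1 n w)) := by
    nlinarith [htest, hG, hψm]
  rw [Ku, div_mul_eq_mul_div, le_div_iff₀ log32_pos]
  nlinarith [h3]

lemma unstable_halving (hN : NormFamily N) (hκ : 1 ≤ κ) (hinv : TInv A N (Z : Set X) κ)
    (hM : 0 < M) (ha : 0 < a) (hgrow : Grow A N M a)
    {w : X} (hw : w ∈ Z) {m nb : ℕ} (hm : 1 ≤ m) (hge : ru κ M a * (m:ℝ) ≤ (nb:ℝ)) :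
    N m (coc A 1 m w) ≤ (1/2) * N nb (coc A 1 nb w) := by
  have hκ0 : (0:ℝ) < κ := by linarith
  have hKu := Ku_pos (κ := κ) (M := M) (a := a) hκ hM
  have hru2 := ru_ge_two (κ := κ) (M := M) (a := a) hκ hM
  have hmR : (1:ℝ) ≤ (m:ℝ) := by exact_mod_cast hm
  have hmnb : m ≤ nb := by
    have : (m:ℝ) ≤ (nb:ℝ) := by nlinarith
    exact_mod_cast this
  have hB0 : 0 ≤ Ku κ M a * N nb (coc A 1 nb w) :=
    mul_nonneg hKu.le (n_nonneg hN (by omega) _)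
  have hB : ∀ k, m + 1 ≤ k → k ≤ nb →
      N k (coc A 1 k w) ≤ Ku κ M a * N nb (coc A 1 nb w) := by
    intro k hk1 hk2
    exact unstable_uniform hN hκ hinv hM ha hgrow hw (by omega) hk2
  have htest := unstable_test hN hinv hM ha hgrow hw hm le_rfl hmnb hB0 hB
  have hG : 2 * (κ * Ku κ M a) ≤ G m nb := by
    apply le_G (by nlinarith)
    rw [ru] at hge
    nlinarith [Real.exp_pos (2 * (κ * Ku κ M a))]
  have hψm : 0 ≤ N m (coc A 1 m w) := n_nonneg hN hm _
  have h3 : 2 * (κ * Ku κ M a) * N m (coc A 1 m w) ≤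
      κ * (Ku κ M a * N nb (coc A 1 nb w)) := by
    nlinarith [htest, hG, hψm]
  have h4 : (κ * Ku κ M a) * (2 * N m (coc A 1 m w)) ≤
      (κ * Ku κ M a) * N nb (coc A 1 nb w) := by nlinarith
  have h5 := le_of_mul_le_mul_left h4 (by positivity)
  linarith

lemma unstable_geom (hN : NormFamily N) (hκ : 1 ≤ κ) (hinv : TInv A N (Z : Set X) κ)
    (hM : 0 < M) (ha : 0 < a) (hgrow : Grow A N M a)
    {w : X} (hw : w ∈ Z) :
    ∀ j : ℕ, ∀ m n : ℕ, 1 ≤ m → (2 * ru κ M a)^j * (m:ℝ) ≤ (n:ℝ) →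
      N m (coc A 1 m w) ≤ (1/2:ℝ)^j * (Ku κ M a * N n (coc A 1 n w)) := by
  have hru2 := ru_ge_two (κ := κ) (M := M) (a := a) hκ hM
  have hru0 : (0:ℝ) < ru κ M a := by linarith
  have hKu := Ku_pos (κ := κ) (M := M) (a := a) hκ hM
  intro j
  induction j with
  | zero =>
      intro m n hm hge
      have hmR : (1:ℝ) ≤ (m:ℝ) := by exact_mod_cast hm
      have hmn : m ≤ n := by
        have : (m:ℝ) ≤ (n:ℝ) := by nlinarith
        exact_mod_cast this
      simpa using unstable_uniform hN hκ hinv hM ha hgrow hw hm hmn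
  | succ j ih =>
      intro m n hm hge
      have hmR : (1:ℝ) ≤ (m:ℝ) := by exact_mod_cast hm
      have hpow1 : (1:ℝ) ≤ (2 * ru κ M a)^j := one_le_pow₀ (by linarith)
      set m₁ := ⌈(2 * ru κ M a)^j * (m:ℝ)⌉₊ with hm₁def
      have hx0 : (0:ℝ) ≤ (2 * ru κ M a)^j * (m:ℝ) := by nlinarith
      have hceil : (2 * ru κ M a)^j * (m:ℝ) ≤ (m₁:ℝ) := Nat.le_ceil _
      have hceil2 : (m₁:ℝ) ≤ 2 * ((2 * ru κ M a)^j * (m:ℝ)) := by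
        have h1 : (m₁:ℝ) < (2 * ru κ M a)^j * (m:ℝ) + 1 := by
          exact_mod_cast Nat.ceil_lt_add_one hx0
        nlinarith
      have hm₁1 : 1 ≤ m₁ := by
        have : (1:ℝ) ≤ (m₁:ℝ) := le_trans (by nlinarith) hceil
        exact_mod_cast this
      have hm₁n : ru κ M a * (m₁:ℝ) ≤ (n:ℝ) := by
        have heq : (2 * ru κ M a)^(j+1) * (m:ℝ)
            = ru κ M a * (2 * ((2 * ru κ M a)^j * (m:ℝ))) := by ring
        nlinarith [hge, hceil2, hru0]
      have hv1 := ih m m₁ hm hceil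
      have hv2 := unstable_halving hN hκ hinv hM ha hgrow hw hm₁1 hm₁n
      have hnn : (0:ℝ) ≤ (1/2:ℝ)^j * Ku κ M a := by positivity
      calc N m (coc A 1 m w) ≤ (1/2:ℝ)^j * (Ku κ M a * N m₁ (coc A 1 m₁ w)) := hv1
        _ ≤ (1/2:ℝ)^j * (Ku κ M a * ((1/2) * N n (coc A 1 n w))) := by
            apply mul_le_mul_of_nonneg_left _ (by positivity)
            exact mul_le_mul_of_nonneg_left hv2 hKu.le
        _ = (1/2:ℝ)^(j+1) * (Ku κ M a * N n (coc A 1 n w)) := by ring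

/-- Final unstable polynomial bound. -/
lemma unstable_decay (hN : NormFamily N) (hκ : 1 ≤ κ) (hinv : TInv A N (Z : Set X) κ)
    (hM : 0 < M) (ha : 0 < a) (hgrow : Grow A N M a)
    {w : X} (hw : w ∈ Z) {m n : ℕ} (hm : 1 ≤ m) (hmn : m ≤ n) :
    N m (coc A 1 m w) ≤ (2 * Ku κ M a) *
      ((m:ℝ)/(n:ℝ)) ^ (Real.log 2 / Real.log (2 * ru κ M a)) * N n (coc A 1 n w) := by
  have hru2 := ru_ge_two (κ := κ) (M := M) (a := a) hκ hM
  have hR : (2:ℝ) ≤ 2 * ru κ M a := by linarith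
  have hm0 : (0:ℝ) < (m:ℝ) := by exact_mod_cast hm
  have hn0 : (0:ℝ) < (n:ℝ) := by exact_mod_cast (le_trans hm hmn)
  have ht : (1:ℝ) ≤ (n:ℝ)/(m:ℝ) := by
    rw [le_div_iff₀ hm0]
    have : (m:ℝ) ≤ (n:ℝ) := by exact_mod_cast hmn
    linarith
  obtain ⟨j, hj1, hj2⟩ := geom_to_poly hR ht
  have hge : (2 * ru κ M a)^j * (m:ℝ) ≤ (n:ℝ) := by
    rw [← le_div_iff₀ hm0] at *
    exact hj1
  have h1 := unstable_geom hN hκ hinv hM ha hgrow hw j m n hm hge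
  have hKuN : 0 ≤ Ku κ M a * N n (coc A 1 n w) :=
    mul_nonneg (Ku_pos (κ := κ) (M := M) (a := a) hκ hM).le (n_nonneg hN (by omega) _)
  have hx0 : (0:ℝ) ≤ (n:ℝ)/(m:ℝ) := by positivity
  have hpow : ((n:ℝ)/(m:ℝ)) ^ (-(Real.log 2 / Real.log (2 * ru κ M a)))
      = ((m:ℝ)/(n:ℝ)) ^ (Real.log 2 / Real.log (2 * ru κ M a)) := by
    rw [show ((m:ℝ)/(n:ℝ)) = ((n:ℝ)/(m:ℝ))⁻¹ from by rw [inv_div],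
      Real.inv_rpow hx0, ← Real.rpow_neg hx0]
  calc N m (coc A 1 m w) ≤ (1/2:ℝ)^j * (Ku κ M a * N n (coc A 1 n w)) := h1
    _ ≤ (2 * ((n:ℝ)/(m:ℝ)) ^ (-(Real.log 2 / Real.log (2 * ru κ M a)))) *
        (Ku κ M a * N n (coc A 1 n w)) := mul_le_mul_of_nonneg_right hj2 hKuN
    _ = (2 * Ku κ M a) * (((n:ℝ)/(m:ℝ)) ^ (-(Real.log 2 / Real.log (2 * ru κ M a)))) *
        N n (coc A 1 n w) := by ring
    _ = (2 * Ku κ M a) *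
        ((m:ℝ)/(n:ℝ)) ^ (Real.log 2 / Real.log (2 * ru κ M a)) * N n (coc A 1 n w) := by
      rw [hpow]


lemma coc_self_apply (A : ℕ → X →L[ℝ] X) (n : ℕ) (x : X) : coc A n n x = x := by
  rw [coc_self]; rfl

/-- TOp of the stable test piece. -/
lemma heq_stable_piece (A : ℕ → X →L[ℝ] X) {n mb : ℕ} (hn : 1 ≤ n) (hmb : n ≤ mb) (p : X)
    {k : ℕ} (hk : 1 ≤ k) :
    TOp A (tseq A n p (fun j => G n (min j mb))) k
      = if n + 1 ≤ k ∧ k ≤ mb then coc A n k p else 0 := by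
  set c : ℕ → ℝ := fun j => G n (min j mb) with hcdef
  have hcd : ∀ j, c j = G n (min j mb) := fun _ => rfl
  have hczero : ∀ j, j ≤ n → c j = 0 := fun j hj => by
    rw [hcd j]; exact G_of_le (le_trans (min_le_left _ _) hj)
  by_cases hk1 : k = 1
  · subst hk1
    rw [TOp_one, if_neg (by omega)]
  have hk2 : 2 ≤ k := by omega
  by_cases hkn : k ≤ n
  · rw [TOp_tseq_zero A n p c hk2 (hczero k hkn) (hczero _ (by omega)), if_neg (by omega)]
  · push_neg at hkn
    have hbk : n ≤ k - 1 := by omega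
    rw [TOp_tseq A n p c hk2 hbk]
    by_cases hkmb : k ≤ mb
    · have e1 : min k mb = k := min_eq_left hkmb
      have e2 : min (k - 1) mb = k - 1 := min_eq_left (by omega)
      have e3 : c k - c (k - 1) = 1 / (k : ℝ) := by
        rw [hcd k, hcd (k - 1), e1, e2]
        have hg := G_succ (n := n) (m := k - 1) (by omega)
        have hk1' : k - 1 + 1 = k := by omega
        rw [hk1'] at hg
        have hcast : ((k - 1 : ℕ) : ℝ) + 1 = (k : ℝ) := by
          have h5 : ((k - 1 : ℕ) : ℝ) = (k : ℝ) - 1 := by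
            push_cast [Nat.cast_sub (by omega : 1 ≤ k)]; ring
          rw [h5]; ring
        rw [hg, hcast]; ring
      rw [e3, if_pos ⟨by omega, hkmb⟩]
      have h6 : (k : ℝ) * (1 / (k : ℝ)) = 1 := by
        have : (k : ℝ) ≠ 0 := by positivity
        field_simp
      rw [h6, one_smul]
    · have e3 : c k - c (k - 1) = 0 := by
        rw [hcd k, hcd (k - 1), min_eq_right (by omega), min_eq_right (by omega), sub_self]
      rw [e3, if_neg (by omega)]
      simp

/-- TOp of the unstable test piece. -/
lemma heq_unstable_piece (A : ℕ → X →L[ℝ] X) {n nb : ℕ} (hn : 1 ≤ n) (hnnb : n ≤ nb) (w : X)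
    {k : ℕ} (hk : 1 ≤ k) :
    TOp A (tseq A 1 w (fun j => G n (min (max j n) nb) - G n nb)) k
      = if n + 1 ≤ k ∧ k ≤ nb then coc A 1 k w else 0 := by
  set c : ℕ → ℝ := fun j => G n (min (max j n) nb) - G n nb with hcdef
  have hcd : ∀ j, c j = G n (min (max j n) nb) - G n nb := fun _ => rfl
  have hclow : ∀ j, j ≤ n → c j = -G n nb := by
    intro j hj
    rw [hcd j, max_eq_right hj, min_eq_left hnnb, G_of_le le_rfl]
    ring
  have hchigh : ∀ j, nb ≤ j → c j = 0 := by
    intro j hj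
    rw [hcd j, max_eq_left (le_trans hnnb hj), min_eq_right hj, sub_self]
  by_cases hk1 : k = 1
  · subst hk1
    rw [TOp_one, if_neg (by omega)]
  have hk2 : 2 ≤ k := by omega
  rw [TOp_tseq A 1 w c hk2 (by omega)]
  by_cases hkn : k ≤ n
  · rw [hclow k hkn, hclow (k - 1) (by omega), sub_self, if_neg (by omega)]
    simp
  · push_neg at hkn
    by_cases hknb : k ≤ nb
    · have e3 : c k - c (k - 1) = 1 / (k : ℝ) := by
        rw [hcd k, hcd (k - 1), max_eq_left (by omega : n ≤ k),
          min_eq_left hknb, max_eq_left (by omega : n ≤ k - 1),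
          min_eq_left (by omega : k - 1 ≤ nb)]
        have hg := G_succ (n := n) (m := k - 1) (by omega)
        have hk1' : k - 1 + 1 = k := by omega
        rw [hk1'] at hg
        have hcast : ((k - 1 : ℕ) : ℝ) + 1 = (k : ℝ) := by
          have h5 : ((k - 1 : ℕ) : ℝ) = (k : ℝ) - 1 := by
            push_cast [Nat.cast_sub (by omega : 1 ≤ k)]; ring
          rw [h5]; ring
        rw [hg, hcast]; ring
      rw [e3, if_pos ⟨by omega, hknb⟩]
      have h6 : (k : ℝ) * (1 / (k : ℝ)) = 1 := by
        have : (k : ℝ) ≠ 0 := by positivity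
        field_simp
      rw [h6, one_smul]
    · rw [hchigh k (by omega), hchigh (k - 1) (by omega), sub_self, if_neg (by omega)]
      simp

section Decomp

variable {Z : Submodule ℝ X} {A : ℕ → X →L[ℝ] X} {κ M a : ℝ}

lemma Xs_sub (hN : NormFamily N) {n : ℕ} (hn : 1 ≤ n) {p q : X}
    (hp : p ∈ Xs A N n) (hq : q ∈ Xs A N n) : p - q ∈ Xs A N n := by
  obtain ⟨S₁, hS₁⟩ := hp
  obtain ⟨S₂, hS₂⟩ := hq
  refine ⟨S₁ + S₂, fun m hm => ?_⟩
  have hm1 : 1 ≤ m := le_trans hn hm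
  have e : coc A n m (p - q) = coc A n m p + -(coc A n m q) := by
    rw [map_sub]; abel
  rw [e]
  calc N m (coc A n m p + -(coc A n m q))
      ≤ N m (coc A n m p) + N m (-(coc A n m q)) := n_add hN hm1 _ _
    _ = N m (coc A n m p) + N m (coc A n m q) := by rw [n_neg hN hm1]
    _ ≤ S₁ + S₂ := add_le_add (hS₁ m hm) (hS₂ m hm)

/-- `Xs(n) ∩ Zs(n) = 0`. -/
lemma inter_trivial (hN : NormFamily N) (hκ : 1 ≤ κ) (hinv : TInv A N (Z : Set X) κ)
    (hM : 0 < M) (ha : 0 < a) (hgrow : Grow A N M a)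
    {n : ℕ} (hn : 1 ≤ n) {w : X} (hw : w ∈ Z)
    (hXs : coc A 1 n w ∈ Xs A N n) : coc A 1 n w = 0 := by
  obtain ⟨S, hS⟩ := hXs
  have hKu := Ku_pos (κ := κ) (M := M) (a := a) hκ hM
  have hψn : 0 ≤ N n (coc A 1 n w) := n_nonneg hN hn _
  have hSn : N n (coc A 1 n w) ≤ S := by
    have := hS n le_rfl
    rwa [coc_self_apply] at this
  have hS0 : 0 ≤ S := le_trans hψn hSn
  have hbd : ∀ k, 1 ≤ k → N k (coc A 1 k w) ≤ max S (Ku κ M a * S) := by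
    intro k hk
    by_cases hkn : n ≤ k
    · have e : coc A n k (coc A 1 n w) = coc A 1 k w := coc_comp A hn hkn w
      have := hS k hkn
      rw [e] at this
      exact le_trans this (le_max_left _ _)
    · have h1 := unstable_uniform hN hκ hinv hM ha hgrow hw hk (by omega : k ≤ n)
      have h2 : Ku κ M a * N n (coc A 1 n w) ≤ Ku κ M a * S :=
        mul_le_mul_of_nonneg_left hSn hKu.le
      exact le_trans (le_trans h1 h2) (le_max_right _ _)
  exact homog_zero hN hinv hw hbd n hn

lemma decomp_unique (hN : NormFamily N) (hκ : 1 ≤ κ) (hinv : TInv A N (Z : Set X) κ)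
    (hM : 0 < M) (ha : 0 < a) (hgrow : Grow A N M a)
    {n : ℕ} (hn : 1 ≤ n) {p₁ p₂ w₁ w₂ : X}
    (hp₁ : p₁ ∈ Xs A N n) (hp₂ : p₂ ∈ Xs A N n) (hw₁ : w₁ ∈ Z) (hw₂ : w₂ ∈ Z)
    (h : p₁ + coc A 1 n w₁ = p₂ + coc A 1 n w₂) : p₁ = p₂ := by
  have hu : p₁ - p₂ = coc A 1 n (w₂ - w₁) := by
    rw [map_sub, sub_eq_sub_iff_add_eq_add]
    rw [add_comm p₂] at h
    exact h
  have hXs : coc A 1 n (w₂ - w₁) ∈ Xs A N n := by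
    rw [← hu]
    exact Xs_sub hN hn hp₁ hp₂
  have hz := inter_trivial hN hκ hinv hM ha hgrow hn (Submodule.sub_mem Z hw₂ hw₁) hXs
  rw [hz] at hu
  exact sub_eq_zero.mp hu

/-- Existence of the decomposition `v = p + 𝓐(n,1)w`. -/
lemma exists_decomp (hN : NormFamily N) (hinv : TInv A N (Z : Set X) κ)
    {n : ℕ} (hn : 1 ≤ n) (v : X) :
    ∃ p w, w ∈ Z ∧ p ∈ Xs A N n ∧ v = p + coc A 1 n w := by
  set y : ℕ → X := fun k => if k = n + 1 then A n v else 0 with hydef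
  have hyd : ∀ k, y k = if k = n + 1 then A n v else 0 := fun _ => rfl
  have hy0 : MemY0 N y := by
    constructor
    · rw [hyd 1, if_neg (by omega)]
    · refine ⟨N (n+1) (A n v), fun k hk => ?_⟩
      rw [hyd k]
      by_cases h : k = n + 1
      · rw [if_pos h, h]
      · rw [if_neg h, n_zero hN hk]
        exact n_nonneg hN (by omega) _
  obtain ⟨x, hxD, heq⟩ := hinv.1 y hy0
  obtain ⟨⟨hx1Z, ⟨S', hS'⟩⟩, hTY⟩ := hxD
  have hrec : ∀ k, 2 ≤ k → k ≠ n + 1 → x k = A (k-1) (x (k-1)) := by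
    intro k hk hkn
    have h1 := heq k (by omega)
    rw [TOp_of_two_le A x hk, hyd k, if_neg hkn] at h1
    have h2 : (k:ℝ) ≠ 0 := by positivity
    rcases smul_eq_zero.mp h1 with h | h
    · exact absurd h h2
    · rw [sub_eq_zero] at h; exact h
  have hseg1 : ∀ k, 1 ≤ k → k ≤ n → x k = coc A 1 k (x 1) := by
    intro k hk
    induction k, hk using Nat.le_induction with
    | base => intro _; rw [coc_self_apply]
    | succ k hk ih =>
        intro hkn
        have h1 := hrec (k+1) (by omega) (by omega)
        have h2 : k + 1 - 1 = k := by omega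
        rw [h2] at h1
        rw [h1, ih (by omega), ← coc_succ_apply A hk]
  have hseg2 : ∀ k, n + 1 ≤ k → x k = coc A (n+1) k (x (n+1)) := by
    intro k hk
    induction k, hk using Nat.le_induction with
    | base => rw [coc_self_apply]
    | succ k hk ih =>
        have h1 := hrec (k+1) (by omega) (by omega)
        have h2 : k + 1 - 1 = k := by omega
        rw [h2] at h1
        rw [h1, ih, ← coc_succ_apply A (by omega : n + 1 ≤ k)]
  have hmain : x (n+1) = A n (x n + ((n:ℝ)+1)⁻¹ • v) := by
    have h1 := heq (n+1) (by omega)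
    rw [TOp_of_two_le A x (by omega), hyd (n+1), if_pos rfl] at h1
    have h2 : n + 1 - 1 = n := by omega
    rw [h2] at h1
    have h3 : ((n + 1 : ℕ):ℝ) ≠ 0 := by positivity
    have h4 : x (n+1) - A n (x n) = (((n + 1 : ℕ):ℝ))⁻¹ • A n v := by
      rw [← h1, inv_smul_smul₀ h3]
    have h5 : x (n+1) = A n (x n) + (((n + 1 : ℕ):ℝ))⁻¹ • A n v := by
      rw [← h4]; abel
    have h6 : ((n:ℝ)+1)⁻¹ = (((n + 1 : ℕ):ℝ))⁻¹ := by push_cast; ring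
    rw [map_add, map_smul, h6, h5]
  refine ⟨((n:ℝ)+1) • x n + v, -(((n:ℝ)+1) • x 1),
    Submodule.neg_mem Z (Submodule.smul_mem Z _ hx1Z), ?_, ?_⟩
  · have hu₀ : (x n + ((n:ℝ)+1)⁻¹ • v) ∈ Xs A N n := by
      refine ⟨max S' (N n (x n + ((n:ℝ)+1)⁻¹ • v)), fun k hk => ?_⟩
      rcases eq_or_lt_of_le hk with h | h
      · rw [← h, coc_self_apply]
        exact le_max_right _ _
      · have hk1 : n + 1 ≤ k := h
        have e2 : coc A n (n+1) (x n + ((n:ℝ)+1)⁻¹ • v) = x (n+1) := by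
          rw [coc_succ_apply A le_rfl, coc_self_apply]
          exact hmain.symm
        have e1 : coc A n k (x n + ((n:ℝ)+1)⁻¹ • v) = x k := by
          rw [← coc_comp A (Nat.le_succ n) hk1, e2, ← hseg2 k hk1]
        rw [e1]
        exact le_trans (hS' k (by omega)) (le_max_left _ _)
    obtain ⟨S₀, hS₀⟩ := hu₀
    refine ⟨|(n:ℝ)+1| * S₀, fun k hk => ?_⟩
    have e : ((n:ℝ)+1) • (x n + ((n:ℝ)+1)⁻¹ • v) = ((n:ℝ)+1) • x n + v := by
      rw [smul_add, smul_smul, mul_inv_cancel₀ (by positivity), one_smul]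
    have hk1 : 1 ≤ k := le_trans hn hk
    rw [← e, map_smul, n_smul hN hk1]
    exact mul_le_mul_of_nonneg_left (hS₀ k hk) (abs_nonneg _)
  · have e : coc A 1 n (-(((n:ℝ)+1) • x 1)) = -(((n:ℝ)+1) • x n) := by
      rw [map_neg, map_smul, ← hseg1 n hn le_rfl]
    rw [e]
    abel

/-- Combined test giving the uniform projection bound. -/
lemma proj_test (hN : NormFamily N) (hinv : TInv A N (Z : Set X) κ)
    (hM : 0 < M) (ha : 0 < a) (hgrow : Grow A N M a)
    {n : ℕ} (hn : 1 ≤ n) {p w : X} {sp : ℝ}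
    (hsp : ∀ k, n ≤ k → N k (coc A n k p) ≤ sp) (hw : w ∈ Z) :
    Real.log (3/2) * N n (coc A 1 n w)
      ≤ κ * (M * (2:ℝ)^a * N n (p + coc A 1 n w)) := by
  have hn0 : (0:ℝ) < (n:ℝ) := by exact_mod_cast hn
  have h2n : n ≤ 2 * n := by omega
  set v := p + coc A 1 n w with hvdef
  set c1 : ℕ → ℝ := fun j => G n (min j (2*n)) with hc1def
  set c2 : ℕ → ℝ := fun j => G n (min (max j n) (2*n)) - G n (2*n) with hc2def
  have hc1d : ∀ j, c1 j = G n (min j (2*n)) := fun _ => rfl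
  have hc2d : ∀ j, c2 j = G n (min (max j n) (2*n)) - G n (2*n) := fun _ => rfl
  set x : ℕ → X := fun k => tseq A n p c1 k + tseq A 1 w c2 k with hxdef
  have hxd : ∀ k, x k = c1 k • coc A n k p + c2 k • coc A 1 k w := fun _ => rfl
  set y : ℕ → X := fun k => if n + 1 ≤ k ∧ k ≤ 2*n then coc A n k v else 0 with hydef
  have hyd : ∀ k, y k = if n + 1 ≤ k ∧ k ≤ 2*n then coc A n k v else 0 := fun _ => rfl
  have hsp0 : 0 ≤ sp := by
    have := hsp n le_rfl
    rw [coc_self_apply] at this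
    exact le_trans (n_nonneg hN hn p) this
  have hc1zero : ∀ j, j ≤ n → c1 j = 0 := fun j hj => by
    rw [hc1d j]; exact G_of_le (le_trans (min_le_left _ _) hj)
  have hc1abs : ∀ j, |c1 j| ≤ G n (2*n) := fun j => by
    rw [hc1d j, abs_of_nonneg (G_nonneg _ _)]; exact G_mono (min_le_right _ _)
  have hc2low : ∀ j, j ≤ n → c2 j = -G n (2*n) := by
    intro j hj
    rw [hc2d j, max_eq_right hj, min_eq_left h2n, G_of_le le_rfl]
    ring
  have hc2high : ∀ j, 2*n ≤ j → c2 j = 0 := by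
    intro j hj
    rw [hc2d j, max_eq_left (le_trans h2n hj), min_eq_right hj, sub_self]
  have hc2abs : ∀ j, |c2 j| ≤ G n (2*n) := by
    intro j
    have h1 : G n (min (max j n) (2*n)) ≤ G n (2*n) := G_mono (min_le_right _ _)
    have h2 : 0 ≤ G n (min (max j n) (2*n)) := G_nonneg _ _
    rw [hc2d j, abs_le]
    constructor <;> linarith
  have hNv : 0 ≤ N n v := n_nonneg hN hn v
  have hSy : ∀ k, 1 ≤ k → N k (y k) ≤ M * (2:ℝ)^a * N n v := by
    intro k hk
    rw [hyd k]
    by_cases hw2 : n + 1 ≤ k ∧ k ≤ 2*n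
    · rw [if_pos hw2]
      have h1 := hgrow k n hn (by omega) v
      have h2 : ((k:ℝ)/(n:ℝ)) ^ a ≤ (2:ℝ)^a := by
        apply Real.rpow_le_rpow (by positivity) _ ha.le
        rw [div_le_iff₀ hn0]
        have : (k:ℝ) ≤ 2 * (n:ℝ) := by exact_mod_cast hw2.2
        linarith
      calc N k (coc A n k v) ≤ M * ((k:ℝ)/(n:ℝ)) ^ a * N n v := h1
        _ ≤ M * (2:ℝ)^a * N n v :=
          mul_le_mul_of_nonneg_right (mul_le_mul_of_nonneg_left h2 hM.le) hNv
    · rw [if_neg hw2, n_zero hN hk]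
      exact mul_nonneg (mul_nonneg hM.le (Real.rpow_pos_of_pos two_pos a).le) hNv
  have heq : ∀ k, 1 ≤ k → TOp A x k = y k := by
    intro k hk
    have e := TOp_add A (tseq A n p c1) (tseq A 1 w c2) k
    rw [hxdef, e, heq_stable_piece A hn h2n p hk, heq_unstable_piece A hn h2n w hk, hyd k]
    by_cases hw2 : n + 1 ≤ k ∧ k ≤ 2*n
    · rw [if_pos hw2, if_pos hw2, if_pos hw2]
      have e2 : coc A n k (coc A 1 n w) = coc A 1 k w := coc_comp A hn (by omega) w
      rw [hvdef, map_add, e2]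
    · rw [if_neg hw2, if_neg hw2, if_neg hw2, add_zero]
  have htraj2 : ∀ k, 1 ≤ k → k ≤ 2*n →
      N k (coc A 1 k w) ≤ M * ((2*n : ℕ):ℝ)^a * N 1 w := by
    intro k hk hk2n
    have h1 := hgrow k 1 le_rfl hk w
    simp only [Nat.cast_one, div_one] at h1
    have h2 : ((k:ℝ)) ^ a ≤ ((2*n : ℕ):ℝ)^a := by
      apply Real.rpow_le_rpow (by positivity) _ ha.le
      exact_mod_cast hk2n
    calc N k (coc A 1 k w) ≤ M * (k:ℝ)^a * N 1 w := h1
      _ ≤ M * ((2*n : ℕ):ℝ)^a * N 1 w := by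
        apply mul_le_mul_of_nonneg_right _ (n_nonneg hN le_rfl w)
        exact mul_le_mul_of_nonneg_left h2 hM.le
  have hxD : MemD A N (Z : Set X) x := by
    refine ⟨⟨?_, ?_⟩, ?_⟩
    · have h7 : x 1 = c2 1 • w := by
        rw [hxd 1, hc1zero 1 hn, zero_smul, zero_add, coc_self_apply]
      rw [h7]
      exact Submodule.smul_mem Z _ hw
    · refine ⟨G n (2*n) * sp + G n (2*n) * (M * ((2*n : ℕ):ℝ)^a * N 1 w),
        fun k hk => ?_⟩
      rw [hxd k]
      have hb1 : N k (c1 k • coc A n k p) ≤ G n (2*n) * sp := by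
        rw [n_smul hN hk]
        by_cases hkn : n ≤ k
        · exact mul_le_mul (hc1abs k) (hsp k hkn) (n_nonneg hN hk _) (G_nonneg _ _)
        · rw [hc1zero k (by omega)]
          simp only [abs_zero, zero_mul]
          exact mul_nonneg (G_nonneg _ _) hsp0
      have hb2 : N k (c2 k • coc A 1 k w) ≤ G n (2*n) * (M * ((2*n : ℕ):ℝ)^a * N 1 w) := by
        rw [n_smul hN hk]
        by_cases hk2n : k ≤ 2*n
        · exact mul_le_mul (hc2abs k) (htraj2 k hk hk2n) (n_nonneg hN hk _) (G_nonneg _ _)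
        · rw [hc2high k (by omega)]
          simp only [abs_zero, zero_mul]
          have h0 : (0:ℝ) ≤ N 1 w := n_nonneg hN le_rfl w
          exact mul_nonneg (G_nonneg _ _)
            (mul_nonneg (mul_nonneg hM.le (Real.rpow_nonneg (by positivity) a)) h0)
      calc N k (c1 k • coc A n k p + c2 k • coc A 1 k w)
          ≤ N k (c1 k • coc A n k p) + N k (c2 k • coc A 1 k w) := n_add hN hk _ _
        _ ≤ _ := add_le_add hb1 hb2
    · exact ⟨M * (2:ℝ)^a * N n v, fun k hk => by rw [heq k hk]; exact hSy k hk⟩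
  have hy0 : MemY0 N y := ⟨by rw [hyd 1, if_neg (by omega)], ⟨M * (2:ℝ)^a * N n v, hSy⟩⟩
  have hb := hinv.2.2 y x hy0 hxD heq _ hSy n hn
  have hxn : N n (x n) = G n (2*n) * N n (coc A 1 n w) := by
    rw [hxd n, hc1zero n le_rfl, zero_smul, zero_add, hc2low n le_rfl,
      n_smul hN hn, abs_neg, abs_of_nonneg (G_nonneg _ _)]
  rw [hxn] at hb
  have hG : Real.log (3/2) ≤ G n (2*n) := by
    apply le_G log32_pos.le
    rw [Real.exp_log (by norm_num : (0:ℝ) < 3/2)]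
    have hn1 : (1:ℝ) ≤ (n:ℝ) := by exact_mod_cast hn
    push_cast
    nlinarith
  have hψ : 0 ≤ N n (coc A 1 n w) := n_nonneg hN hn _
  nlinarith [hb, hG, hψ]

end Decomp

end Boot



end Stmt13Aux



open Stmt13Aux in
set_option maxHeartbeats 2000000 in
/-- if there is a closed subspace `Z ⊆ X` such that `T_Z` is invertible, and
there are `M, a > 0` with `‖𝓐(m,n)x‖_m ≤ M(m/n)^a‖x‖_n` for `m ≥ n`, then `(A_m)` admits
a polynomial dichotomy with respect to the sequence of norms `‖·‖_m`. -/
theorem stmt13 [CompleteSpace X] (A : ℕ → X →L[ℝ] X) (N : ℕ → X → ℝ)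
    (hN : NormFamily N) (Z : Submodule ℝ X) (hZ : IsClosed (Z : Set X))
    (κ : ℝ) (hinv : TInv A N (Z : Set X) κ)
    (M a : ℝ) (hM : 0 < M) (ha : 0 < a) (hgrow : Grow A N M a) :
    PolyDich A N := by
  classical
  -- replace κ by κ' := max κ 1
  set κ' := max κ 1 with hκdef
  have hκ1 : (1:ℝ) ≤ κ' := le_max_right _ _
  have hinv' : TInv A N (Z : Set X) κ' := by
    refine ⟨hinv.1, hinv.2.1, fun y x hy hx heq S hS m hm => ?_⟩
    have hS0 : 0 ≤ S := le_trans (n_nonneg hN le_rfl (y 1)) (hS 1 le_rfl)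
    have h1 := hinv.2.2 y x hy hx heq S hS m hm
    have h2 : κ * S ≤ κ' * S := mul_le_mul_of_nonneg_right (le_max_left _ _) hS0
    linarith
  clear hinv
  -- decomposition function via choice
  have hdecEx : ∀ nv : ℕ × X, ∃ pw : X × X,
      1 ≤ nv.1 → (pw.2 ∈ Z ∧ pw.1 ∈ Xs A N nv.1 ∧ nv.2 = pw.1 + coc A 1 nv.1 pw.2) := by
    rintro ⟨n, v⟩
    by_cases hn : 1 ≤ n
    · obtain ⟨p, w, hw, hp, hv⟩ := exists_decomp hN hinv' hn v
      exact ⟨(p, w), fun _ => ⟨hw, hp, hv⟩⟩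
    · exact ⟨(0, 0), fun h => absurd h hn⟩
  choose f hf using hdecEx
  set Pf : ℕ → X → X := fun n v => (f (n, v)).1 with hPfdef
  set Wf : ℕ → X → X := fun n v => (f (n, v)).2 with hWfdef
  have hPf : ∀ n, 1 ≤ n → ∀ v : X,
      Wf n v ∈ Z ∧ Pf n v ∈ Xs A N n ∧ v = Pf n v + coc A 1 n (Wf n v) :=
    fun n hn v => hf (n, v) hn
  -- uniqueness characterisation
  have hchar : ∀ n, 1 ≤ n → ∀ v p w, p ∈ Xs A N n → w ∈ Z →
      v = p + coc A 1 n w → Pf n v = p := by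
    intro n hn v p w hp hw hv
    obtain ⟨hw', hp', hv'⟩ := hPf n hn v
    exact decomp_unique hN hκ1 hinv' hM ha hgrow hn hp' hp hw' hw (hv'.symm.trans hv)
  have hXs0 : ∀ n, 1 ≤ n → (0 : X) ∈ Xs A N n := fun n hn =>
    ⟨0, fun m hm => by rw [map_zero, n_zero hN (le_trans hn hm)]⟩
  have hker : ∀ n, 1 ≤ n → ∀ w, w ∈ Z → Pf n (coc A 1 n w) = 0 := by
    intro n hn w hw
    apply hchar n hn _ 0 w (hXs0 n hn) hw
    rw [zero_add]
  have hker' : ∀ n, 1 ≤ n → ∀ u, Pf n u = 0 → u = coc A 1 n (Wf n u) := by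
    intro n hn u h0
    obtain ⟨hw, hp, hv⟩ := hPf n hn u
    rw [h0, zero_add] at hv
    exact hv
  -- linearity
  have hadd : ∀ n, 1 ≤ n → ∀ v₁ v₂ : X, Pf n (v₁ + v₂) = Pf n v₁ + Pf n v₂ := by
    intro n hn v₁ v₂
    obtain ⟨hw₁, hp₁, hv₁⟩ := hPf n hn v₁
    obtain ⟨hw₂, hp₂, hv₂⟩ := hPf n hn v₂
    have hXsadd : Pf n v₁ + Pf n v₂ ∈ Xs A N n := by
      obtain ⟨S₁, hS₁⟩ := hp₁
      obtain ⟨S₂, hS₂⟩ := hp₂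
      exact ⟨S₁ + S₂, fun m hm => by
        rw [map_add]
        exact le_trans (n_add hN (le_trans hn hm) _ _)
          (add_le_add (hS₁ m hm) (hS₂ m hm))⟩
    apply hchar n hn _ _ (Wf n v₁ + Wf n v₂) hXsadd (Submodule.add_mem Z hw₁ hw₂)
    rw [map_add]
    conv_lhs => rw [hv₁, hv₂]
    abel
  have hsmul : ∀ n, 1 ≤ n → ∀ (c : ℝ) (v : X), Pf n (c • v) = c • Pf n v := by
    intro n hn c v
    obtain ⟨hw, hp, hv⟩ := hPf n hn v
    have hXss : c • Pf n v ∈ Xs A N n := by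
      obtain ⟨S, hS⟩ := hp
      exact ⟨|c| * S, fun m hm => by
        rw [map_smul, n_smul hN (le_trans hn hm)]
        exact mul_le_mul_of_nonneg_left (hS m hm) (abs_nonneg _)⟩
    apply hchar n hn _ _ (c • Wf n v) hXss (Submodule.smul_mem Z c hw)
    rw [map_smul]
    conv_lhs => rw [hv]
    rw [smul_add]
  -- uniform projection bound
  have hKu := Ku_pos (κ := κ') (M := M) (a := a) hκ1 hM
  have hQbound : ∀ n, 1 ≤ n → ∀ v : X,
      N n (coc A 1 n (Wf n v)) ≤ Ku κ' M a * N n v := by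
    intro n hn v
    obtain ⟨hw, hp, hv⟩ := hPf n hn v
    obtain ⟨sp, hsp⟩ := hp
    have htest := proj_test hN hinv' hM ha hgrow hn hsp hw
    rw [← hv] at htest
    rw [Ku, div_mul_eq_mul_div, le_div_iff₀ log32_pos]
    nlinarith [htest]
  have hPbound : ∀ n, 1 ≤ n → ∀ v : X,
      N n (Pf n v) ≤ (1 + Ku κ' M a) * N n v := by
    intro n hn v
    obtain ⟨hw, hp, hv⟩ := hPf n hn v
    have e : Pf n v = v - coc A 1 n (Wf n v) := by
      rw [eq_sub_iff_add_eq]; exact hv.symm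
    have h1 : N n (Pf n v) ≤ N n v + N n (coc A 1 n (Wf n v)) := by
      rw [e, sub_eq_add_neg]
      exact le_trans (n_add hN hn _ _) (by rw [n_neg hN hn])
    have h2 := hQbound n hn v
    have h3 := n_nonneg hN hn v
    nlinarith [h1, h2]
  -- continuous linear projections
  have hPcont : ∀ n, ∃ P : X →L[ℝ] X, 1 ≤ n → ∀ v, P v = Pf n v := by
    intro n
    by_cases hn : 1 ≤ n
    · obtain ⟨c, C, hc, hcC⟩ := (hN n hn).2.2
      set L : X →ₗ[ℝ] X :=
        { toFun := Pf n
          map_add' := hadd n hn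
          map_smul' := hsmul n hn } with hL
      have hb : ∀ v, ‖L v‖ ≤ (c⁻¹ * ((1 + Ku κ' M a) * C)) * ‖v‖ := by
        intro v
        have h1 : c * ‖Pf n v‖ ≤ N n (Pf n v) := (hcC (Pf n v)).1
        have h2 := hPbound n hn v
        have h3 : N n v ≤ C * ‖v‖ := (hcC v).2
        have h5 : (0:ℝ) ≤ 1 + Ku κ' M a := by nlinarith
        have h6 : c * ‖Pf n v‖ ≤ (1 + Ku κ' M a) * (C * ‖v‖) := by
          calc c * ‖Pf n v‖ ≤ N n (Pf n v) := h1
            _ ≤ (1 + Ku κ' M a) * N n v := h2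
            _ ≤ (1 + Ku κ' M a) * (C * ‖v‖) := mul_le_mul_of_nonneg_left h3 h5
        have h7 : ‖Pf n v‖ ≤ c⁻¹ * ((1 + Ku κ' M a) * (C * ‖v‖)) := by
          calc ‖Pf n v‖ = c⁻¹ * (c * ‖Pf n v‖) := by field_simp
            _ ≤ c⁻¹ * ((1 + Ku κ' M a) * (C * ‖v‖)) :=
              mul_le_mul_of_nonneg_left h6 (inv_nonneg.2 hc.le)
        have h8 : c⁻¹ * ((1 + Ku κ' M a) * (C * ‖v‖))
            = (c⁻¹ * ((1 + Ku κ' M a) * C)) * ‖v‖ := by ring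
        calc ‖L v‖ = ‖Pf n v‖ := rfl
          _ ≤ _ := by rw [← h8]; exact h7
      exact ⟨L.mkContinuous _ hb, fun _ v => rfl⟩
    · exact ⟨0, fun h => absurd h hn⟩
  choose P hP using hPcont
  -- constants
  have hrs2 := rs_ge_two (κ := κ') (M := M) (a := a) hκ1 hM
  have hru2 := ru_ge_two (κ := κ') (M := M) (a := a) hκ1 hM
  have hKs := Ks_pos (κ := κ') (M := M) (a := a) hM
  set lams := Real.log 2 / Real.log (2 * rs κ' M a) with hlamsdef
  set lamu := Real.log 2 / Real.log (2 * ru κ' M a) with hlamudef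
  have hlams0 : 0 < lams :=
    div_pos (Real.log_pos one_lt_two) (Real.log_pos (by linarith))
  have hlamu0 : 0 < lamu :=
    div_pos (Real.log_pos one_lt_two) (Real.log_pos (by linarith))
  set lam := min lams lamu with hlamdef
  have hlam0 : 0 < lam := lt_min hlams0 hlamu0
  set D := 2 * Ks κ' M a * (1 + Ku κ' M a) + 2 * Ku κ' M a with hD
  have hD0 : 0 < D := by nlinarith
  refine ⟨P, D, lam, hD0, hlam0, ?_, ?_, ?_, ?_, ?_⟩
  · -- idempotent
    intro m hm
    ext v
    show P m (P m v) = P m v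
    rw [hP m hm v, hP m hm (Pf m v)]
    apply hchar m hm _ _ 0 (hPf m hm v).2.1 (Submodule.zero_mem Z)
    rw [map_zero, add_zero]
  · -- intertwining
    intro m hm
    ext v
    show A m (P m v) = P (m+1) (A m v)
    rw [hP m hm v, hP (m+1) (by omega) (A m v)]
    symm
    obtain ⟨hwZ, hpXs, hv⟩ := hPf m hm v
    have hXsA : A m (Pf m v) ∈ Xs A N (m+1) := by
      obtain ⟨S, hS⟩ := hpXs
      refine ⟨S, fun k hk => ?_⟩
      rw [coc_shift A hk]
      exact hS k (by omega)
    apply hchar (m+1) (by omega) _ _ (Wf m v) hXsA hwZ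
    conv_lhs => rw [hv]
    rw [map_add, coc_succ_apply A hm]
  · -- bijectivity on kernels
    intro m hm y h0
    rw [hP (m+1) (by omega) y] at h0
    have hy := hker' (m+1) (by omega) y h0
    set w := Wf (m+1) y with hwdef
    have hwZ : w ∈ Z := (hPf (m+1) (by omega) y).1
    refine ⟨coc A 1 m w, ⟨?_, ?_⟩, ?_⟩
    · rw [hP m hm]
      exact hker m hm w hwZ
    · rw [← coc_succ_apply A hm, ← hy]
    · rintro x' ⟨h1, h2⟩
      rw [hP m hm x'] at h1
      have hx' := hker' m hm x' h1
      set w' := Wf m x' with hw'def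
      have hw'Z : w' ∈ Z := (hPf m hm x').1
      have hu : x' - coc A 1 m w = coc A 1 m (w' - w) := by
        rw [map_sub]
        conv_lhs => rw [hx']
      have hA0 : coc A 1 (m+1) (w' - w) = 0 := by
        rw [coc_succ_apply A hm, ← hu, map_sub, h2, ← coc_succ_apply A hm, ← hy, sub_self]
      have h3 := unstable_uniform hN hκ1 hinv' hM ha hgrow
        (Submodule.sub_mem Z hw'Z hwZ) hm (Nat.le_succ m)
      rw [hA0, n_zero hN (by omega)] at h3
      have h4 : 0 ≤ N m (coc A 1 m (w' - w)) := n_nonneg hN hm _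
      have h5 : N m (coc A 1 m (w' - w)) = 0 := le_antisymm (by linarith) h4
      have h6 := n_eq_zero hN hm h5
      rw [h6] at hu
      exact sub_eq_zero.mp hu
  · -- stable estimate
    intro m n hn hnm x
    rw [hP n hn x]
    have h1 := stable_decay hN hκ1 hinv' hM ha hgrow hn (hPf n hn x).2.1 hnm
    have hq := hPbound n hn x
    have hn0 : (0:ℝ) < (n:ℝ) := by exact_mod_cast hn
    have ht1 : (1:ℝ) ≤ (m:ℝ)/(n:ℝ) := by
      rw [le_div_iff₀ hn0]
      have : (n:ℝ) ≤ (m:ℝ) := by exact_mod_cast hnm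
      linarith
    have hpow : ((m:ℝ)/(n:ℝ)) ^ (-lams) ≤ ((m:ℝ)/(n:ℝ)) ^ (-lam) := by
      apply Real.rpow_le_rpow_of_exponent_le ht1
      have := min_le_left lams lamu
      rw [hlamdef]
      linarith [min_le_left lams lamu]
    have hNx := n_nonneg hN hn x
    have hpw0 : (0:ℝ) ≤ ((m:ℝ)/(n:ℝ)) ^ (-lam) := Real.rpow_nonneg (by positivity) _
    have hpw0' : (0:ℝ) ≤ ((m:ℝ)/(n:ℝ)) ^ (-lams) := Real.rpow_nonneg (by positivity) _
    calc N m (coc A n m (Pf n x))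
        ≤ 2 * Ks κ' M a * ((m:ℝ)/(n:ℝ)) ^ (-lams) * N n (Pf n x) := h1
      _ ≤ 2 * Ks κ' M a * ((m:ℝ)/(n:ℝ)) ^ (-lams) * ((1 + Ku κ' M a) * N n x) := by
          apply mul_le_mul_of_nonneg_left hq
          exact mul_nonneg (by nlinarith) hpw0'
      _ = (2 * Ks κ' M a * (1 + Ku κ' M a)) * (((m:ℝ)/(n:ℝ)) ^ (-lams) * N n x) := by
          ring
      _ ≤ (2 * Ks κ' M a * (1 + Ku κ' M a)) * (((m:ℝ)/(n:ℝ)) ^ (-lam) * N n x) := by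
          apply mul_le_mul_of_nonneg_left (mul_le_mul_of_nonneg_right hpow hNx)
          nlinarith
      _ ≤ D * (((m:ℝ)/(n:ℝ)) ^ (-lam) * N n x) := by
          apply mul_le_mul_of_nonneg_right _ (mul_nonneg hpw0 hNx)
          rw [hD]
          nlinarith
      _ = D * ((m:ℝ)/(n:ℝ)) ^ (-lam) * N n x := by ring
  · -- unstable estimate
    intro m n hm hmn u h0
    rw [hP m hm u] at h0
    have hu := hker' m hm u h0
    set w := Wf m u with hwdef
    have hwZ : w ∈ Z := (hPf m hm u).1
    have hn1 : 1 ≤ n := le_trans hm hmn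
    have h1 := unstable_decay hN hκ1 hinv' hM ha hgrow hwZ hm hmn
    have hm0 : (0:ℝ) < (m:ℝ) := by exact_mod_cast hm
    have hn0 : (0:ℝ) < (n:ℝ) := by exact_mod_cast hn1
    have hb0 : (0:ℝ) < (m:ℝ)/(n:ℝ) := by positivity
    have hb1 : (m:ℝ)/(n:ℝ) ≤ 1 := by
      rw [div_le_one hn0]
      exact_mod_cast hmn
    have hpow : ((m:ℝ)/(n:ℝ)) ^ lamu ≤ ((m:ℝ)/(n:ℝ)) ^ lam := by
      apply Real.rpow_le_rpow_of_exponent_ge hb0 hb1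
      rw [hlamdef]
      exact min_le_right lams lamu
    have hψn : 0 ≤ N n (coc A 1 n w) := n_nonneg hN hn1 _
    have hcc : coc A m n u = coc A 1 n w := by
      conv_lhs => rw [hu]
      exact coc_comp A hm hmn w
    rw [hcc]
    have hpw0 : (0:ℝ) ≤ ((m:ℝ)/(n:ℝ)) ^ lam := Real.rpow_nonneg hb0.le _
    calc N m u = N m (coc A 1 m w) := by rw [← hu]
      _ ≤ 2 * Ku κ' M a * ((m:ℝ)/(n:ℝ)) ^ lamu * N n (coc A 1 n w) := h1
      _ = (2 * Ku κ' M a) * (((m:ℝ)/(n:ℝ)) ^ lamu * N n (coc A 1 n w)) := by ring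
      _ ≤ (2 * Ku κ' M a) * (((m:ℝ)/(n:ℝ)) ^ lam * N n (coc A 1 n w)) := by
          apply mul_le_mul_of_nonneg_left (mul_le_mul_of_nonneg_right hpow hψn)
          nlinarith
      _ ≤ D * (((m:ℝ)/(n:ℝ)) ^ lam * N n (coc A 1 n w)) := by
          apply mul_le_mul_of_nonneg_right _ (mul_nonneg hpw0 hψn)
          rw [hD]
          nlinarith
      _ = D * ((m:ℝ)/(n:ℝ)) ^ lam * N n (coc A 1 n w) := by ring
end

section
/- The sequence (A_m)_{m∈ℕ} admits a polynomial contraction with respect to the sequence of norms ‖·‖_m if and only if: there exist M, a > 0 with ‖A(m,n)x‖_m ≤ M(m/n)^a‖x‖_n for all m ≥ n and x ∈ X, and for each y = (y_n) ∈ Y_0, the sequence x_n = Σ_{k=1}^n (1/k) A(n,k) y_k belongs to Y_0 (i.e., is bounded in the norms ‖·‖_n and has x_1 = 0). -/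
open scoped BigOperators

variable {X : Type*} [NormedAddCommGroup X] [NormedSpace ℝ X]

lemma coc_zero (A : ℕ → X →L[ℝ] X) (n : ℕ) : coc A n 0 = 1 := rfl

lemma coc_succ (A : ℕ → X →L[ℝ] X) {n m : ℕ} (h : n ≤ m) :
    coc A n (m + 1) = (A m).comp (coc A n m) := by
  simp [coc, h]

lemma coc_of_le (A : ℕ → X →L[ℝ] X) {n m : ℕ} (h : m ≤ n) : coc A n m = 1 := by
  cases m with
  | zero => rfl
  | succ m => simp [coc, Nat.not_le.mpr (Nat.lt_of_succ_le h)]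

lemma coc_comp (A : ℕ → X →L[ℝ] X) {n k m : ℕ} (hnk : n ≤ k) (hkm : k ≤ m) :
    (coc A k m).comp (coc A n k) = coc A n m := by
  induction m, hkm using Nat.le_induction with
  | base => rw [coc_of_le A le_rfl, ContinuousLinearMap.one_def, ContinuousLinearMap.id_comp]
  | succ m hkm ih =>
      rw [coc_succ A (hnk.trans hkm), coc_succ A hkm, ContinuousLinearMap.comp_assoc, ih]

lemma coc_apply_comp (A : ℕ → X →L[ℝ] X) {n k m : ℕ} (hnk : n ≤ k) (hkm : k ≤ m) (x : X) :
    coc A k m (coc A n k x) = coc A n m x := by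
  rw [← coc_comp A hnk hkm]; rfl

section Nlem
variable {N : ℕ → X → ℝ} {m : ℕ}

lemma N_add (hN : NormFamily N) (hm : 1 ≤ m) (x y : X) : N m (x + y) ≤ N m x + N m y := (hN m hm).1 x y

lemma N_smul (hN : NormFamily N) (hm : 1 ≤ m) (c : ℝ) (x : X) : N m (c • x) = |c| * N m x := (hN m hm).2.1 c x

lemma N_nonneg (hN : NormFamily N) (hm : 1 ≤ m) (x : X) : 0 ≤ N m x := by
  obtain ⟨c, C, hc, h⟩ := (hN m hm).2.2
  exact le_trans (by positivity) (h x).1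

lemma N_zero (hN : NormFamily N) (hm : 1 ≤ m) : N m (0 : X) = 0 := by
  have := N_smul hN hm (0 : ℝ) (0 : X)
  simpa using this

lemma N_neg (hN : NormFamily N) (hm : 1 ≤ m) (x : X) : N m (-x) = N m x := by
  have := N_smul hN hm (-1 : ℝ) x
  simpa using this

lemma N_sum (hN : NormFamily N) (hm : 1 ≤ m) {ι : Type*} (s : Finset ι) (f : ι → X) :
    N m (∑ i ∈ s, f i) ≤ ∑ i ∈ s, N m (f i) := by
  classical
  induction s using Finset.induction with
  | empty => simp [N_zero hN hm]
  | insert _ _ hnot ih =>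
      rw [Finset.sum_insert hnot, Finset.sum_insert hnot]
      exact le_trans (N_add hN hm _ _) (by linarith)

lemma N_le_add_sub (hN : NormFamily N) (hm : 1 ≤ m) (x y : X) : N m x ≤ N m y + N m (x - y) := by
  have := N_add hN hm y (x - y)
  simpa using this

end Nlem

lemma bern {l : ℝ} (hl0 : 0 < l) (hl1 : l ≤ 1) {x : ℝ} (hx : 1 ≤ x) :
    l * x ^ (l - 1) ≤ x ^ l - (x - 1) ^ l := by
  have hx0 : (0:ℝ) < x := lt_of_lt_of_le one_pos hx
  have hinv : x⁻¹ ≤ 1 := inv_le_one_of_one_le₀ hx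
  have h := rpow_one_add_le_one_add_mul_self (s := -x⁻¹)
    (by linarith) hl0.le hl1
  have h1x : (0:ℝ) ≤ 1 + -x⁻¹ := by
    have : (0:ℝ) ≤ 1 - x⁻¹ := by linarith
    linarith
  have hmul := mul_le_mul_of_nonneg_right h (Real.rpow_nonneg hx0.le l)
  rw [← Real.mul_rpow h1x hx0.le] at hmul
  have hxx : (1 + -x⁻¹) * x = x - 1 := by field_simp; ring
  rw [hxx] at hmul
  have hpow : x⁻¹ * x ^ l = x ^ (l - 1) := by
    rw [Real.rpow_sub hx0, Real.rpow_one]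
    field_simp
  nlinarith [hmul, hpow]

lemma sum_rpow_le {l : ℝ} (hl0 : 0 < l) (hl1 : l ≤ 1) (n : ℕ) :
    ∑ k ∈ Finset.Icc 1 n, ((k : ℝ)) ^ (l - 1) ≤ (n : ℝ) ^ l / l := by
  induction n with
  | zero => simp [Real.zero_rpow hl0.ne']
  | succ n ih =>
      rw [Finset.sum_Icc_succ_top (Nat.one_le_iff_ne_zero.mpr (Nat.succ_ne_zero n))]
      have hb := bern hl0 hl1 (x := ((n : ℝ) + 1))
        (by have := Nat.cast_nonneg (α := ℝ) n; linarith)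
      have : ((n:ℝ) + 1) - 1 = (n : ℝ) := by ring
      rw [this] at hb
      have hcast : ((n + 1 : ℕ) : ℝ) = (n : ℝ) + 1 := by push_cast; ring
      rw [hcast, le_div_iff₀ hl0]
      rw [le_div_iff₀ hl0] at ih
      nlinarith [ih, hb]

lemma sum_inv_div_le {l : ℝ} (hl0 : 0 < l) (hl1 : l ≤ 1)
    (hsum : ∀ n : ℕ, ∑ k ∈ Finset.Icc 1 n, ((k : ℝ)) ^ (l - 1) ≤ (n : ℝ) ^ l / l)
    {n : ℕ} (hn : 1 ≤ n) :
    ∑ k ∈ Finset.Icc 1 n, ((k : ℝ))⁻¹ * (((n : ℝ) / (k : ℝ)) ^ (-l)) ≤ l⁻¹ := by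
  have hn0 : (0:ℝ) < (n:ℝ) := by exact_mod_cast hn
  have hnl : (0:ℝ) < (n:ℝ) ^ l := Real.rpow_pos_of_pos hn0 l
  have heq : ∀ k ∈ Finset.Icc 1 n,
      ((k : ℝ))⁻¹ * (((n : ℝ) / (k : ℝ)) ^ (-l)) = ((k:ℝ) ^ (l-1)) * ((n:ℝ) ^ l)⁻¹ := by
    intro k hk
    obtain ⟨hk1, hkn⟩ := Finset.mem_Icc.mp hk
    have hk0 : (0:ℝ) < (k:ℝ) := by exact_mod_cast hk1
    rw [Real.rpow_neg (by positivity), Real.div_rpow hn0.le hk0.le]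
    rw [Real.rpow_sub hk0, Real.rpow_one]
    field_simp
  rw [Finset.sum_congr rfl heq, ← Finset.sum_mul]
  have := hsum n
  calc (∑ k ∈ Finset.Icc 1 n, ((k:ℝ) ^ (l-1))) * ((n:ℝ) ^ l)⁻¹
      ≤ ((n : ℝ) ^ l / l) * ((n:ℝ) ^ l)⁻¹ := by
        apply mul_le_mul_of_nonneg_right this (by positivity)
    _ = l⁻¹ := by field_simp

section Space

variable (N : ℕ → X → ℝ)

def Ymod (hN : NormFamily N) : Submodule ℝ (ℕ → X) where
  carrier := {y | y 0 = 0 ∧ y 1 = 0 ∧ ∃ S : ℝ, ∀ m, 1 ≤ m → N m (y m) ≤ S}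
  zero_mem' := ⟨rfl, rfl, 0, fun m hm => le_of_eq (N_zero hN hm)⟩
  add_mem' := by
    rintro a b ⟨ha0, ha1, Sa, hSa⟩ ⟨hb0, hb1, Sb, hSb⟩
    refine ⟨by simp [ha0, hb0], by simp [ha1, hb1], Sa + Sb, fun m hm => ?_⟩
    exact le_trans (N_add hN hm _ _) (add_le_add (hSa m hm) (hSb m hm))
  smul_mem' := by
    rintro c a ⟨ha0, ha1, Sa, hSa⟩
    refine ⟨by simp [ha0], by simp [ha1], |c| * Sa, fun m hm => ?_⟩
    rw [Pi.smul_apply, N_smul hN hm]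
    exact mul_le_mul_of_nonneg_left (hSa m hm) (abs_nonneg c)

def Ysp (hN : NormFamily N) : Type _ := ↥(Ymod N hN)

variable {N} {hN : NormFamily N}

instance : AddCommGroup (Ysp N hN) := inferInstanceAs (AddCommGroup ↥(Ymod N hN))
instance : Module ℝ (Ysp N hN) := inferInstanceAs (Module ℝ ↥(Ymod N hN))

def Ysp.mk (y : ℕ → X) (h : y ∈ Ymod N hN) : Ysp N hN := show ↥(Ymod N hN) from ⟨y, h⟩

def Ysp.seq (y : Ysp N hN) : ℕ → X := (show ↥(Ymod N hN) from y).1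

lemma Ysp.seq_mk (y : ℕ → X) (h : y ∈ Ymod N hN) : (Ysp.mk y h).seq = y := rfl

lemma Ysp.prop (y : Ysp N hN) : y.seq ∈ Ymod N hN := (show ↥(Ymod N hN) from y).2

lemma Ysp.ext {y z : Ysp N hN} (h : y.seq = z.seq) : y = z := Subtype.ext h

@[simp] lemma Ysp.zero_seq : (0 : Ysp N hN).seq = 0 := rfl
@[simp] lemma Ysp.add_seq (a b : Ysp N hN) : (a + b).seq = a.seq + b.seq := rfl
@[simp] lemma Ysp.neg_seq (a : Ysp N hN) : (-a).seq = -a.seq := rfl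
@[simp] lemma Ysp.sub_seq (a b : Ysp N hN) : (a - b).seq = a.seq - b.seq := rfl
@[simp] lemma Ysp.smul_seq (c : ℝ) (a : Ysp N hN) : (c • a).seq = c • a.seq := rfl

noncomputable def nY (y : Ysp N hN) : ℝ := ⨆ m : ℕ, N (m + 1) (y.seq (m + 1))

lemma bddY (y : Ysp N hN) :
    BddAbove (Set.range fun m : ℕ => N (m + 1) (y.seq (m + 1))) := by
  obtain ⟨-, -, S, hS⟩ := y.prop
  exact ⟨S, by rintro _ ⟨m, rfl⟩; exact hS (m + 1) (Nat.le_add_left 1 m)⟩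

lemma le_nY (y : Ysp N hN) {m : ℕ} (hm : 1 ≤ m) : N m (y.seq m) ≤ nY y := by
  cases m with
  | zero => omega
  | succ n => exact le_ciSup (bddY y) n

lemma nY_nonneg (y : Ysp N hN) : 0 ≤ nY y :=
  le_trans (N_nonneg hN le_rfl (y.seq 1)) (le_nY y le_rfl)

lemma nY_le (y : Ysp N hN) {B : ℝ} (h : ∀ m, 1 ≤ m → N m (y.seq m) ≤ B) : nY y ≤ B :=
  ciSup_le fun m => h (m + 1) (Nat.le_add_left 1 m)

noncomputable instance : NormedAddCommGroup (Ysp N hN) :=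
  AddGroupNorm.toNormedAddCommGroup
  { toFun := nY
    map_zero' := le_antisymm
      (nY_le 0 (fun m hm => by rw [Ysp.zero_seq, Pi.zero_apply, N_zero hN hm]))
      (nY_nonneg 0)
    add_le' := fun a b => nY_le _ (fun m hm => by
      rw [Ysp.add_seq, Pi.add_apply]
      exact le_trans (N_add hN hm _ _) (add_le_add (le_nY a hm) (le_nY b hm)))
    neg' := fun a => by
      unfold nY
      congr 1
      funext m
      rw [Ysp.neg_seq, Pi.neg_apply, N_neg hN (Nat.le_add_left 1 m)]
    eq_zero_of_map_eq_zero' := fun y hy => by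
      apply Ysp.ext
      funext m
      rcases Nat.eq_zero_or_pos m with rfl | hm
      · exact y.prop.1
      · obtain ⟨-, -, c, C, hc, hb⟩ := hN m hm
        have h1 : N m (y.seq m) ≤ 0 := hy ▸ le_nY y hm
        have h2 := (hb (y.seq m)).1
        have : ‖y.seq m‖ ≤ 0 := by nlinarith [norm_nonneg (y.seq m)]
        simpa using le_antisymm this (norm_nonneg _) }

lemma norm_Ysp (y : Ysp N hN) : ‖y‖ = nY y := rfl

noncomputable instance : NormedSpace ℝ (Ysp N hN) where
  norm_smul_le c y := by
    rw [norm_Ysp, norm_Ysp]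
    refine nY_le _ (fun m hm => ?_)
    rw [Ysp.smul_seq, Pi.smul_apply, N_smul hN hm, Real.norm_eq_abs]
    exact mul_le_mul_of_nonneg_left (le_nY y hm) (abs_nonneg c)

end Space
section Complete
variable {N : ℕ → X → ℝ} {hN : NormFamily N}

lemma coord_le (a b : Ysp N hN) {m : ℕ} (hm : 1 ≤ m) :
    N m (a.seq m - b.seq m) ≤ ‖a - b‖ := by
  rw [norm_Ysp]
  have := le_nY (a - b) hm
  rwa [Ysp.sub_seq, Pi.sub_apply] at this

instance [CompleteSpace X] : CompleteSpace (Ysp N hN) := by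
  apply Metric.complete_of_cauchySeq_tendsto
  intro u hu
  have hcs : ∀ m, 1 ≤ m → CauchySeq fun j => (u j).seq m := by
    intro m hm
    obtain ⟨-, -, c, C, hc, hb⟩ := hN m hm
    rw [Metric.cauchySeq_iff] at hu ⊢
    intro ε hε
    obtain ⟨J, hJ⟩ := hu (c * ε) (by positivity)
    refine ⟨J, fun i hi j hj => ?_⟩
    have h1 := hJ i hi j hj
    rw [dist_eq_norm] at h1 ⊢
    have h2 := (hb ((u i).seq m - (u j).seq m)).1
    have h3 : N m ((u i).seq m - (u j).seq m) ≤ ‖u i - u j‖ := coord_le _ _ hm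
    nlinarith [norm_nonneg ((u i).seq m - (u j).seq m)]
  have hzall : ∀ m, ∃ zz : X, Filter.Tendsto (fun j => (u j).seq m) Filter.atTop (nhds zz) := by
    intro m
    rcases Nat.eq_zero_or_pos m with rfl | hm
    · refine ⟨0, ?_⟩
      have e0 : (fun j => (u j).seq 0) = fun _ => (0 : X) := funext fun j => (u j).prop.1
      rw [e0]; exact tendsto_const_nhds
    · exact cauchySeq_tendsto_of_complete (hcs m hm)
  choose z hz using hzall
  have hz0 : z 0 = 0 := by
    have e0 : (fun j => (u j).seq 0) = fun _ => (0 : X) := funext fun j => (u j).prop.1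
    exact tendsto_nhds_unique (hz 0) (by rw [e0]; exact tendsto_const_nhds)
  have hz1 : z 1 = 0 := by
    have e1 : (fun j => (u j).seq 1) = fun _ => (0 : X) := funext fun j => (u j).prop.2.1
    exact tendsto_nhds_unique (hz 1) (by rw [e1]; exact tendsto_const_nhds)
  obtain ⟨R, hR0, hRd⟩ := cauchySeq_bdd hu
  have hub : ∀ j, ‖u j‖ ≤ ‖u 0‖ + R := by
    intro j
    have h1 := hRd j 0
    rw [dist_eq_norm] at h1
    have h2 := norm_sub_norm_le (u j) (u 0)
    linarith
  have hbd : ∀ m, 1 ≤ m → N m (z m) ≤ ‖u 0‖ + R + 1 := by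
    intro m hm
    obtain ⟨-, -, c, C, hc, hb⟩ := hN m hm
    set Cm : ℝ := max C 1 with hCm
    have hCm0 : (0:ℝ) < Cm := lt_of_lt_of_le one_pos (le_max_right _ _)
    obtain ⟨I, hI⟩ := (Metric.tendsto_atTop).1 (hz m) (Cm⁻¹) (by positivity)
    have hdist := hI I le_rfl
    rw [dist_eq_norm, ← norm_neg, neg_sub] at hdist
    have key := N_le_add_sub hN hm (z m) ((u I).seq m)
    have t1 : N m ((u I).seq m) ≤ ‖u 0‖ + R :=
      le_trans (le_trans (le_nY (u I) hm) (le_of_eq (norm_Ysp (u I)).symm)) (hub I)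
    have t2 : N m (z m - (u I).seq m) ≤ 1 := by
      have h2 := (hb (z m - (u I).seq m)).2
      have h3 : C * ‖z m - (u I).seq m‖ ≤ Cm * ‖z m - (u I).seq m‖ :=
        mul_le_mul_of_nonneg_right (le_max_left _ _) (norm_nonneg _)
      have h4 : Cm * ‖z m - (u I).seq m‖ ≤ Cm * Cm⁻¹ :=
        mul_le_mul_of_nonneg_left hdist.le hCm0.le
      rw [mul_inv_cancel₀ hCm0.ne'] at h4
      linarith
    linarith
  set w : Ysp N hN := Ysp.mk z ⟨hz0, hz1, ‖u 0‖ + R + 1, hbd⟩ with hw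
  refine ⟨w, ?_⟩
  rw [Metric.tendsto_atTop]
  intro ε hε
  rw [Metric.cauchySeq_iff] at hu
  obtain ⟨J, hJ⟩ := hu (ε / 4) (by positivity)
  refine ⟨J, fun j hj => ?_⟩
  rw [dist_eq_norm, norm_Ysp]
  have hle : nY (u j - w) ≤ ε / 2 := by
    refine nY_le _ (fun m hm => ?_)
    rw [Ysp.sub_seq, Pi.sub_apply]
    have hwseq : w.seq m = z m := by rw [hw]; rfl
    rw [hwseq]
    obtain ⟨-, -, c, C, hc, hb⟩ := hN m hm
    set Cm : ℝ := max C 1 with hCm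
    have hCm0 : (0:ℝ) < Cm := lt_of_lt_of_le one_pos (le_max_right _ _)
    obtain ⟨I, hI⟩ := (Metric.tendsto_atTop).1 (hz m) (Cm⁻¹ * (ε / 4)) (by positivity)
    set i : ℕ := max I J with hi
    have hdist := hI i (le_max_left _ _)
    rw [dist_eq_norm] at hdist
    have key := N_le_add_sub hN hm ((u j).seq m - z m) ((u j).seq m - (u i).seq m)
    have e : ((u j).seq m - z m) - ((u j).seq m - (u i).seq m) = (u i).seq m - z m := by abel
    rw [e] at key
    have t1 : N m ((u j).seq m - (u i).seq m) < ε / 4 := by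
      have := hJ j hj i (le_max_right _ _)
      rw [dist_eq_norm] at this
      exact lt_of_le_of_lt (coord_le (u j) (u i) hm) this
    have t2 : N m ((u i).seq m - z m) ≤ ε / 4 := by
      have h2 := (hb ((u i).seq m - z m)).2
      have h3 : C * ‖(u i).seq m - z m‖ ≤ Cm * ‖(u i).seq m - z m‖ :=
        mul_le_mul_of_nonneg_right (le_max_left _ _) (norm_nonneg _)
      have h4 : Cm * ‖(u i).seq m - z m‖ ≤ Cm * (Cm⁻¹ * (ε / 4)) :=
        mul_le_mul_of_nonneg_left hdist.le hCm0.le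
      rw [← mul_assoc, mul_inv_cancel₀ hCm0.ne', one_mul] at h4
      linarith
    linarith
  linarith
end Complete
section Key

noncomputable def xseq (A : ℕ → X →L[ℝ] X) (y : ℕ → X) (n : ℕ) : X :=
  ∑ k ∈ Finset.Icc 1 n, ((k : ℝ))⁻¹ • coc A k n (y k)

lemma xseq_zero (A : ℕ → X →L[ℝ] X) (y : ℕ → X) : xseq A y 0 = 0 := by
  simp [xseq]

lemma xseq_one (A : ℕ → X →L[ℝ] X) (y : ℕ → X) (hy : y 1 = 0) : xseq A y 1 = 0 := by
  simp [xseq, hy]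

lemma xseq_add (A : ℕ → X →L[ℝ] X) (a b : ℕ → X) (n : ℕ) :
    xseq A (a + b) n = xseq A a n + xseq A b n := by
  simp [xseq, Finset.sum_add_distrib, smul_add]

lemma xseq_smul (A : ℕ → X →L[ℝ] X) (c : ℝ) (a : ℕ → X) (n : ℕ) :
    xseq A (c • a) n = c • xseq A a n := by
  simp only [xseq, Pi.smul_apply, map_smul, Finset.smul_sum, smul_comm c]

variable {N : ℕ → X → ℝ}

lemma delta_mem (A : ℕ → X →L[ℝ] X) (hN : NormFamily N) (n : ℕ) (y : Ysp N hN) :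
    (fun m => if m = n then xseq A y.seq n else 0) ∈ Ymod N hN := by
  refine ⟨?_, ?_, max (N n (xseq A y.seq n)) 0, ?_⟩
  · dsimp only
    split_ifs with h
    · rw [← h, xseq_zero]
    · rfl
  · dsimp only
    split_ifs with h
    · rw [← h, xseq_one A y.seq y.prop.2.1]
    · rfl
  · intro m hm
    dsimp only
    split_ifs with h
    · subst h; exact le_max_left _ _
    · rw [N_zero hN hm]; exact le_max_right _ _

noncomputable def lamF (A : ℕ → X →L[ℝ] X) (hN : NormFamily N) (n : ℕ) :
    Ysp N hN →ₗ[ℝ] Ysp N hN where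
  toFun y := Ysp.mk (fun m => if m = n then xseq A y.seq n else 0) (delta_mem A hN n y)
  map_add' a b := by
    apply Ysp.ext
    funext m
    rw [Ysp.add_seq (Ysp.mk (fun m => if m = n then xseq A a.seq n else 0) (delta_mem A hN n a))]
    simp only [Ysp.seq_mk, Pi.add_apply]
    split_ifs with h
    · rw [show (a + b).seq = a.seq + b.seq from rfl, xseq_add]
    · rw [add_zero]
  map_smul' c a := by
    apply Ysp.ext
    funext m
    simp only [Ysp.seq_mk, RingHom.id_apply, Ysp.smul_seq, Pi.smul_apply]
    split_ifs with h
    · rw [xseq_smul]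
    · rw [smul_zero]

lemma lamF_seq (A : ℕ → X →L[ℝ] X) (hN : NormFamily N) (n : ℕ) (y : Ysp N hN) (m : ℕ) :
    (lamF A hN n y).seq m = if m = n then xseq A y.seq n else 0 := rfl

lemma lamF_norm_le (A : ℕ → X →L[ℝ] X) (hN : NormFamily N) (n : ℕ) (y : Ysp N hN)
    {B : ℝ} (hB : 0 ≤ B) (h : 1 ≤ n → N n (xseq A y.seq n) ≤ B) : ‖lamF A hN n y‖ ≤ B := by
  rw [norm_Ysp]
  refine nY_le _ (fun m hm => ?_)
  rw [lamF_seq]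
  split_ifs with hc
  · subst hc; exact h hm
  · rw [N_zero hN hm]; exact hB

lemma lamF_bound (A : ℕ → X →L[ℝ] X) (hN : NormFamily N) (n : ℕ) :
    ∃ L, ∀ y : Ysp N hN, ‖lamF A hN n y‖ ≤ L * ‖y‖ := by
  have hc' : ∀ m : ℕ, ∃ c C : ℝ, 0 < c ∧
      (1 ≤ m → ∀ x : X, c * ‖x‖ ≤ N m x ∧ N m x ≤ C * ‖x‖) := by
    intro m
    rcases Nat.eq_zero_or_pos m with rfl | hm
    · exact ⟨1, 1, one_pos, by omega⟩
    · obtain ⟨-, -, c, C, hc, hb⟩ := hN m hm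
      exact ⟨c, C, hc, fun _ => hb⟩
  choose cf Cf hcf hbf using hc'
  set L : ℝ := ∑ k ∈ Finset.Icc 1 n,
    ((k:ℝ))⁻¹ * (max (Cf n) 0 * (‖coc A k n‖ * (cf k)⁻¹)) with hL
  have hL0 : 0 ≤ L := by
    apply Finset.sum_nonneg
    intro k hk
    have := (hcf k).le
    positivity
  refine ⟨L, fun y => ?_⟩
  have hy0 : 0 ≤ ‖y‖ := norm_nonneg y
  refine lamF_norm_le A hN n y (by positivity) (fun hn => ?_)
  calc N n (xseq A y.seq n)
      ≤ ∑ k ∈ Finset.Icc 1 n, N n (((k:ℝ))⁻¹ • coc A k n (y.seq k)) :=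
        N_sum hN hn _ _
    _ ≤ ∑ k ∈ Finset.Icc 1 n,
        ((k:ℝ))⁻¹ * (max (Cf n) 0 * (‖coc A k n‖ * (cf k)⁻¹)) * ‖y‖ := by
        refine Finset.sum_le_sum (fun k hk => ?_)
        obtain ⟨hk1, hkn⟩ := Finset.mem_Icc.mp hk
        rw [N_smul hN hn, abs_of_nonneg (by positivity : (0:ℝ) ≤ ((k:ℝ))⁻¹)]
        rw [mul_assoc]
        refine mul_le_mul_of_nonneg_left ?_ (by positivity)
        -- N n (coc A k n (y.seq k)) ≤ max (Cf n) 0 * (‖coc A k n‖ * (cf k)⁻¹) * ‖y‖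
        have s1 : N n (coc A k n (y.seq k)) ≤ max (Cf n) 0 * ‖coc A k n (y.seq k)‖ := by
          refine le_trans ((hbf n hn _).2) ?_
          exact mul_le_mul_of_nonneg_right (le_max_left _ _) (norm_nonneg _)
        have s2 : ‖coc A k n (y.seq k)‖ ≤ ‖coc A k n‖ * ‖y.seq k‖ :=
          ContinuousLinearMap.le_opNorm _ _
        have s3 : ‖y.seq k‖ ≤ (cf k)⁻¹ * N k (y.seq k) := by
          have := (hbf k hk1 (y.seq k)).1
          rw [le_inv_mul_iff₀ (hcf k)]
          linarith
        have s4 : N k (y.seq k) ≤ ‖y‖ := by rw [norm_Ysp]; exact le_nY y hk1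
        have hcoc : (0:ℝ) ≤ ‖coc A k n‖ := norm_nonneg _
        have hcfk : (0:ℝ) < cf k := hcf k
        have hCfn : (0:ℝ) ≤ max (Cf n) 0 := le_max_right _ _
        calc N n (coc A k n (y.seq k)) ≤ max (Cf n) 0 * ‖coc A k n (y.seq k)‖ := s1
          _ ≤ max (Cf n) 0 * (‖coc A k n‖ * ‖y.seq k‖) :=
              mul_le_mul_of_nonneg_left s2 hCfn
          _ ≤ max (Cf n) 0 * (‖coc A k n‖ * ((cf k)⁻¹ * N k (y.seq k))) := by
              refine mul_le_mul_of_nonneg_left (mul_le_mul_of_nonneg_left s3 hcoc) hCfn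
          _ ≤ max (Cf n) 0 * (‖coc A k n‖ * ((cf k)⁻¹ * ‖y‖)) := by
              refine mul_le_mul_of_nonneg_left (mul_le_mul_of_nonneg_left
                (mul_le_mul_of_nonneg_left s4 (by positivity)) hcoc) hCfn
          _ = max (Cf n) 0 * (‖coc A k n‖ * (cf k)⁻¹) * ‖y‖ := by ring
    _ = L * ‖y‖ := by rw [hL, Finset.sum_mul]

lemma key (A : ℕ → X →L[ℝ] X) (hN : NormFamily N) [CompleteSpace X]
    (hAdm : ∀ y : ℕ → X, MemY0 N y → MemY0 N (xseq A y)) :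
    ∃ κ : ℝ, 0 ≤ κ ∧ ∀ y : ℕ → X, y ∈ Ymod N hN → ∀ S, 0 ≤ S →
      (∀ m, 1 ≤ m → N m (y m) ≤ S) → ∀ n, 1 ≤ n → N n (xseq A y n) ≤ κ * S := by
  set g : ℕ → Ysp N hN →L[ℝ] Ysp N hN :=
    fun n => LinearMap.mkContinuousOfExistsBound (lamF A hN n) (lamF_bound A hN n) with hg
  have hgapp : ∀ n (y : Ysp N hN), g n y = lamF A hN n y := fun n y => rfl
  have hpt : ∀ y : Ysp N hN, ∃ C, ∀ n, ‖g n y‖ ≤ C := by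
    intro y
    obtain ⟨hx1, S0, hS0⟩ := hAdm y.seq ⟨y.prop.2.1, y.prop.2.2⟩
    refine ⟨max S0 0, fun n => ?_⟩
    rw [hgapp]
    exact lamF_norm_le A hN n y (le_max_right _ _)
      (fun hn => le_trans (hS0 n hn) (le_max_left _ _))
  obtain ⟨κ0, hκ0⟩ := banach_steinhaus hpt
  refine ⟨max κ0 0, le_max_right _ _, ?_⟩
  intro y hy S hS hSb n hn
  set yY : Ysp N hN := Ysp.mk y hy with hyY
  have h1 : N n (xseq A y n) ≤ ‖g n yY‖ := by
    rw [hgapp, norm_Ysp]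
    have := le_nY (lamF A hN n yY) hn
    rwa [lamF_seq, if_pos rfl, Ysp.seq_mk] at this
  have h2 : ‖g n yY‖ ≤ ‖g n‖ * ‖yY‖ := ContinuousLinearMap.le_opNorm _ _
  have h3 : ‖yY‖ ≤ S := by
    rw [norm_Ysp]
    exact nY_le _ (fun m hm => by rw [Ysp.seq_mk]; exact hSb m hm)
  have h4 : ‖g n‖ ≤ max κ0 0 := le_trans (hκ0 n) (le_max_left _ _)
  calc N n (xseq A y n) ≤ ‖g n‖ * ‖yY‖ := le_trans h1 h2
    _ ≤ max κ0 0 * S := mul_le_mul h4 h3 (norm_nonneg _) (le_max_right _ _)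

end Key
section Endgame
set_option maxHeartbeats 1000000

variable {N : ℕ → X → ℝ}

lemma xseq_eq (A : ℕ → X →L[ℝ] X) {n : ℕ} (v : X) (φ : ℕ → ℝ) {m : ℕ} (hm : n ≤ m) :
    xseq A (fun k => if n ≤ k then φ k • coc A n k v else 0) m
      = (∑ k ∈ Finset.Icc 1 m, if n ≤ k then (k:ℝ)⁻¹ * φ k else 0) • coc A n m v := by
  rw [xseq, Finset.sum_smul]
  refine Finset.sum_congr rfl (fun k hk => ?_)
  obtain ⟨hk1, hkm⟩ := Finset.mem_Icc.mp hk
  split_ifs with h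
  · rw [map_smul, coc_apply_comp A h hkm, smul_smul]
  · rw [map_zero, smul_zero, zero_smul]

lemma log_le_sum_inv {n m : ℕ} (hn : 1 ≤ n) (hm : n ≤ m) :
    Real.log ((m:ℝ)/(n:ℝ)) ≤ ∑ k ∈ Finset.Icc n m, ((k:ℝ))⁻¹ := by
  have hn0 : (0:ℝ) < (n:ℝ) := by exact_mod_cast hn
  have hm0 : (0:ℝ) < (m:ℝ) := lt_of_lt_of_le hn0 (by exact_mod_cast hm)
  have htel : ∑ k ∈ Finset.Ico n m, (Real.log (((k+1:ℕ)):ℝ) - Real.log (k:ℝ))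
      = Real.log (m:ℝ) - Real.log (n:ℝ) := by
    rw [Finset.sum_Ico_eq_sub _ hm,
      Finset.sum_range_sub (fun k : ℕ => Real.log (k:ℝ)),
      Finset.sum_range_sub (fun k : ℕ => Real.log (k:ℝ))]
    simp
  have hstep : ∀ k ∈ Finset.Ico n m, Real.log (((k+1:ℕ)):ℝ) - Real.log (k:ℝ) ≤ ((k:ℝ))⁻¹ := by
    intro k hk
    obtain ⟨hk1, -⟩ := Finset.mem_Ico.mp hk
    have hk0 : (0:ℝ) < (k:ℝ) := by exact_mod_cast lt_of_lt_of_le Nat.zero_lt_one (hn.trans hk1)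
    have hc : (((k+1:ℕ)):ℝ) = (k:ℝ)+1 := by push_cast; ring
    rw [hc]
    have h1 : Real.log (((k:ℝ)+1)/(k:ℝ)) ≤ ((k:ℝ)+1)/(k:ℝ) - 1 :=
      Real.log_le_sub_one_of_pos (by positivity)
    rw [Real.log_div (by positivity) hk0.ne'] at h1
    have h2 : ((k:ℝ)+1)/(k:ℝ) - 1 = ((k:ℝ))⁻¹ := by field_simp; ring
    linarith [h2.le, h2.ge]
  calc Real.log ((m:ℝ)/(n:ℝ)) = Real.log (m:ℝ) - Real.log (n:ℝ) :=
        Real.log_div hm0.ne' hn0.ne'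
    _ = ∑ k ∈ Finset.Ico n m, (Real.log (((k+1:ℕ)):ℝ) - Real.log (k:ℝ)) := htel.symm
    _ ≤ ∑ k ∈ Finset.Ico n m, ((k:ℝ))⁻¹ := Finset.sum_le_sum hstep
    _ ≤ ∑ k ∈ Finset.Icc n m, ((k:ℝ))⁻¹ := by
        refine Finset.sum_le_sum_of_subset_of_nonneg ?_ (fun k _ _ => by positivity)
        intro k hk
        obtain ⟨h1, h2⟩ := Finset.mem_Ico.mp hk
        exact Finset.mem_Icc.mpr ⟨h1, h2.le⟩

lemma coeff_lower (g : ℕ → ℝ) (hg : ∀ k, 0 ≤ g k) {n m' m : ℕ} (hn : 1 ≤ n)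
    (hm' : m' ≤ m) :
    ∑ k ∈ Finset.Icc n m', g k ≤ ∑ k ∈ Finset.Icc 1 m, if n ≤ k then g k else 0 := by
  calc ∑ k ∈ Finset.Icc n m', g k
      = ∑ k ∈ Finset.Icc n m', (if n ≤ k then g k else 0) := by
        refine Finset.sum_congr rfl (fun k hk => ?_)
        rw [if_pos (Finset.mem_Icc.mp hk).1]
    _ ≤ ∑ k ∈ Finset.Icc 1 m, if n ≤ k then g k else 0 := by
        refine Finset.sum_le_sum_of_subset_of_nonneg
          (Finset.Icc_subset_Icc hn hm') (fun k _ _ => ?_)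
        split_ifs with h
        · exact hg k
        · exact le_rfl

lemma test_bound (A : ℕ → X →L[ℝ] X) (hN : NormFamily N) (κ : ℝ)
    (hkey : ∀ y : ℕ → X, y ∈ Ymod N hN → ∀ S, 0 ≤ S →
      (∀ m, 1 ≤ m → N m (y m) ≤ S) → ∀ n, 1 ≤ n → N n (xseq A y n) ≤ κ * S)
    {n : ℕ} (hn2 : 2 ≤ n) (v : X) (φ : ℕ → ℝ) (hφ : ∀ k, 0 ≤ φ k)
    {S : ℝ} (hS : 0 ≤ S)
    (hb : ∀ k, n ≤ k → N k (φ k • coc A n k v) ≤ S)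
    {m : ℕ} (hm : n ≤ m) :
    (∑ k ∈ Finset.Icc 1 m, if n ≤ k then (k:ℝ)⁻¹ * φ k else 0) * N m (coc A n m v)
      ≤ κ * S := by
  have hm1 : 1 ≤ m := le_trans (by omega) hm
  set y : ℕ → X := fun k => if n ≤ k then φ k • coc A n k v else 0 with hy
  have hby : ∀ m', 1 ≤ m' → N m' (y m') ≤ S := by
    intro m' hm'
    rw [hy]
    dsimp only
    split_ifs with h
    · exact hb m' h
    · rw [N_zero hN hm']; exact hS
  have hmem : y ∈ Ymod N hN := by
    exact ⟨by simp [hy, show ¬ n ≤ 0 by omega], by simp [hy, show ¬ n ≤ 1 by omega], S, hby⟩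
  have hkey1 := hkey y hmem S hS hby m hm1
  rw [hy] at hkey1
  rw [xseq_eq A v φ hm] at hkey1
  have hcnn : (0:ℝ) ≤ ∑ k ∈ Finset.Icc 1 m, if n ≤ k then (k:ℝ)⁻¹ * φ k else 0 := by
    refine Finset.sum_nonneg (fun k hk => ?_)
    split_ifs with h
    · exact mul_nonneg (by positivity) (hφ k)
    · exact le_rfl
  rwa [N_smul hN hm1, abs_of_nonneg hcnn] at hkey1

lemma contraction_of_key (A : ℕ → X →L[ℝ] X) (hN : NormFamily N)
    (M a : ℝ) (hM : 0 < M) (ha : 0 < a) (hGrow : Grow A N M a)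
    (κ : ℝ) (hκ : 0 ≤ κ)
    (hkey : ∀ y : ℕ → X, y ∈ Ymod N hN → ∀ S, 0 ≤ S →
      (∀ m, 1 ≤ m → N m (y m) ≤ S) → ∀ n, 1 ≤ n → N n (xseq A y n) ≤ κ * S) :
    ∃ D lam : ℝ, 0 < D ∧ 0 < lam ∧
      ∀ m n, 1 ≤ n → n ≤ m → ∀ x : X,
        N m (coc A n m x) ≤ D * (((m : ℝ) / (n : ℝ)) ^ (-lam)) * N n x := by
  have h2a : (0:ℝ) < (2:ℝ) ^ a := Real.rpow_pos_of_pos two_pos a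
  set C₁ : ℝ := M * 2 ^ a + 2 * 2 ^ a * (κ * M) with hC₁
  have hC₁0 : 0 < C₁ := by positivity
  -- Step 1: uniform bound for n ≥ 2
  have step1 : ∀ n, 2 ≤ n → ∀ m, n ≤ m → ∀ v : X,
      N m (coc A n m v) ≤ C₁ * N n v := by
    intro n hn2 m hnm v
    have hn1 : 1 ≤ n := by omega
    have hm1 : 1 ≤ m := by omega
    have hn0 : (0:ℝ) < (n:ℝ) := by exact_mod_cast hn1
    have hNnv : 0 ≤ N n v := N_nonneg hN hn1 v
    have hNm : 0 ≤ N m (coc A n m v) := N_nonneg hN hm1 _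
    rcases le_or_gt m (2 * n) with hcase | hcase
    · have h1 := hGrow m n hn1 hnm v
      have h2 : ((m:ℝ)/(n:ℝ)) ^ a ≤ (2:ℝ) ^ a := by
        apply Real.rpow_le_rpow (by positivity) _ ha.le
        rw [div_le_iff₀ hn0]
        exact_mod_cast hcase
      have h3 : M * (((m:ℝ)/(n:ℝ)) ^ a) * N n v ≤ M * 2 ^ a * N n v :=
        mul_le_mul_of_nonneg_right (mul_le_mul_of_nonneg_left h2 hM.le) hNnv
      nlinarith [mul_nonneg (mul_nonneg
        (by positivity : (0:ℝ) ≤ 2 * (2:ℝ) ^ a) (mul_nonneg hκ hM.le)) hNnv]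
    · -- test sequence with weights (n/k)^a
      have hb : ∀ k, n ≤ k → N k ((((n:ℝ)/(k:ℝ)) ^ a) • coc A n k v) ≤ M * N n v := by
        intro k hk
        have hk1 : 1 ≤ k := le_trans hn1 hk
        have hk0 : (0:ℝ) < (k:ℝ) := by exact_mod_cast hk1
        have hrn : (0:ℝ) ≤ ((n:ℝ)/(k:ℝ)) ^ a := Real.rpow_nonneg (by positivity) a
        rw [N_smul hN hk1, abs_of_nonneg hrn]
        have hgrow := hGrow k n hn1 hk v
        have hprod : ((n:ℝ)/(k:ℝ)) ^ a * (((k:ℝ)/(n:ℝ)) ^ a) = 1 := by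
          rw [← Real.mul_rpow (by positivity) (by positivity),
            show (n:ℝ)/(k:ℝ) * ((k:ℝ)/(n:ℝ)) = 1 by field_simp]
          exact Real.one_rpow a
        calc ((n:ℝ)/(k:ℝ)) ^ a * N k (coc A n k v)
            ≤ ((n:ℝ)/(k:ℝ)) ^ a * (M * (((k:ℝ)/(n:ℝ)) ^ a) * N n v) :=
              mul_le_mul_of_nonneg_left hgrow hrn
          _ = M * (((n:ℝ)/(k:ℝ)) ^ a * (((k:ℝ)/(n:ℝ)) ^ a)) * N n v := by ring
          _ = M * N n v := by rw [hprod, mul_one]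
      have htb := test_bound A hN κ hkey hn2 v (fun k => ((n:ℝ)/(k:ℝ)) ^ a)
        (fun k => Real.rpow_nonneg (by positivity) a) (by positivity) hb hnm
      -- lower bound on the coefficient
      set c : ℝ := ∑ k ∈ Finset.Icc 1 m, if n ≤ k then (k:ℝ)⁻¹ * ((n:ℝ)/(k:ℝ)) ^ a else 0
        with hcdef
      set β : ℝ := (2*(n:ℝ))⁻¹ * ((2:ℝ) ^ a)⁻¹ with hβ
      have hlow1 : ∀ k ∈ Finset.Icc n (2*n), β ≤ (k:ℝ)⁻¹ * ((n:ℝ)/(k:ℝ)) ^ a := by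
        intro k hk
        obtain ⟨hk1, hk2⟩ := Finset.mem_Icc.mp hk
        have hk0 : (0:ℝ) < (k:ℝ) := by exact_mod_cast (le_trans hn1 hk1)
        have hi : (2*(n:ℝ))⁻¹ ≤ (k:ℝ)⁻¹ := by
          apply inv_anti₀ hk0
          exact_mod_cast hk2
        have h12 : (2:ℝ)⁻¹ ≤ (n:ℝ)/(k:ℝ) := by
          rw [le_div_iff₀ hk0]
          have : (k:ℝ) ≤ 2*(n:ℝ) := by exact_mod_cast hk2
          linarith
        have hr : ((2:ℝ) ^ a)⁻¹ ≤ ((n:ℝ)/(k:ℝ)) ^ a := by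
          rw [← Real.inv_rpow (by norm_num : (0:ℝ) ≤ 2)]
          exact Real.rpow_le_rpow (by norm_num) h12 ha.le
        rw [hβ]
        exact mul_le_mul hi hr (by positivity) (by positivity)
      have hcard : (Finset.Icc n (2*n)).card = n + 1 := by
        rw [Nat.card_Icc]; omega
      have hsum1 : ((n:ℝ)+1) * β ≤ ∑ k ∈ Finset.Icc n (2*n), (k:ℝ)⁻¹ * ((n:ℝ)/(k:ℝ)) ^ a := by
        have := Finset.card_nsmul_le_sum (Finset.Icc n (2*n))
          (fun k => (k:ℝ)⁻¹ * ((n:ℝ)/(k:ℝ)) ^ a) β hlow1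
        rw [hcard] at this
        rw [show ((n:ℝ)+1) = ((n+1 : ℕ):ℝ) by push_cast; ring]
        rwa [nsmul_eq_mul] at this
      have hsum2 : ∑ k ∈ Finset.Icc n (2*n), (k:ℝ)⁻¹ * ((n:ℝ)/(k:ℝ)) ^ a ≤ c := by
        rw [hcdef]
        exact coeff_lower _ (fun k => mul_nonneg (by positivity)
          (Real.rpow_nonneg (by positivity) a)) hn1 hcase.le
      have hβt : (2:ℝ)⁻¹ * ((2:ℝ) ^ a)⁻¹ ≤ c := by
        refine le_trans ?_ (le_trans hsum1 hsum2)
        rw [hβ]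
        have h1 : (2:ℝ)⁻¹ ≤ ((n:ℝ)+1) * (2*(n:ℝ))⁻¹ := by
          rw [← div_eq_mul_inv, le_div_iff₀ (by positivity)]
          linarith
        calc (2:ℝ)⁻¹ * ((2:ℝ)^a)⁻¹ ≤ (((n:ℝ)+1) * (2*(n:ℝ))⁻¹) * ((2:ℝ)^a)⁻¹ :=
              mul_le_mul_of_nonneg_right h1 (by positivity)
          _ = ((n:ℝ)+1) * ((2*(n:ℝ))⁻¹ * ((2:ℝ)^a)⁻¹) := by ring
      -- conclude
      have hchain : ((2:ℝ)⁻¹ * ((2:ℝ)^a)⁻¹) * N m (coc A n m v) ≤ κ * (M * N n v) :=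
        le_trans (mul_le_mul_of_nonneg_right hβt hNm) htb
      have hone : (2 * (2:ℝ)^a) * ((2:ℝ)⁻¹ * ((2:ℝ)^a)⁻¹) = 1 := by
        field_simp
      calc N m (coc A n m v)
          = (2 * (2:ℝ)^a) * (((2:ℝ)⁻¹ * ((2:ℝ)^a)⁻¹) * N m (coc A n m v)) := by
            rw [← mul_assoc, hone, one_mul]
        _ ≤ (2 * (2:ℝ)^a) * (κ * (M * N n v)) :=
            mul_le_mul_of_nonneg_left hchain (by positivity)
        _ ≤ C₁ * N n v := by rw [hC₁]; nlinarith [mul_nonneg (mul_nonneg hM.le h2a.le) hNnv]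
  -- Step 2: logarithmic decay for n ≥ 2
  have step2 : ∀ n : ℕ, 2 ≤ n → ∀ m : ℕ, n ≤ m → ∀ v : X,
      Real.log ((m:ℝ)/(n:ℝ)) * N m (coc A n m v) ≤ κ * (C₁ * N n v) := by
    intro n hn2 m hnm v
    have hn1 : 1 ≤ n := by omega
    have hm1 : 1 ≤ m := by omega
    have hNnv : 0 ≤ N n v := N_nonneg hN hn1 v
    have hNm : 0 ≤ N m (coc A n m v) := N_nonneg hN hm1 _
    have hb : ∀ k, n ≤ k → N k ((1:ℝ) • coc A n k v) ≤ C₁ * N n v := by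
      intro k hk
      rw [one_smul]
      exact step1 n hn2 k hk v
    have htb := test_bound A hN κ hkey hn2 v (fun _ => (1:ℝ))
      (fun k => zero_le_one) (by positivity) hb hnm
    have hlog : Real.log ((m:ℝ)/(n:ℝ))
        ≤ ∑ k ∈ Finset.Icc 1 m, if n ≤ k then (k:ℝ)⁻¹ * (1:ℝ) else 0 := by
      refine le_trans (log_le_sum_inv hn1 hnm) (le_trans (le_of_eq ?_)
        (coeff_lower (fun k => (k:ℝ)⁻¹ * 1) (fun k => by positivity) hn1 le_rfl))
      refine Finset.sum_congr rfl (fun k hk => ?_)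
      simp
    exact le_trans (mul_le_mul_of_nonneg_right hlog hNm) htb
  -- Step 3: choose the scale r
  set L₀ : ℝ := 2*(κ*C₁+1) with hL₀
  have hκC₁ : 0 ≤ κ * C₁ := mul_nonneg hκ hC₁0.le
  set r : ℕ := max 2 ⌈Real.exp L₀⌉₊ with hr
  have hr2 : 2 ≤ r := le_max_left _ _
  have hr0 : (0:ℝ) < (r:ℝ) := by positivity
  have hr1 : (1:ℝ) < (r:ℝ) := by exact_mod_cast lt_of_lt_of_le one_lt_two hr2
  have hlogr : L₀ ≤ Real.log r := by
    rw [Real.le_log_iff_exp_le hr0]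
    calc Real.exp L₀ ≤ (⌈Real.exp L₀⌉₊ : ℝ) := Nat.le_ceil _
      _ ≤ (r:ℝ) := by exact_mod_cast le_max_right 2 ⌈Real.exp L₀⌉₊
  have hlogr0 : 0 < Real.log r := Real.log_pos hr1
  -- half-step
  have half : ∀ n, 2 ≤ n → ∀ m, r * n ≤ m → ∀ v : X,
      N m (coc A n m v) ≤ (1/2) * N n v := by
    intro n hn2 m hm v
    have hn1 : 1 ≤ n := by omega
    have hnm : n ≤ m := le_trans (Nat.le_mul_of_pos_left n (by omega : 0 < r)) hm
    have hm1 : 1 ≤ m := le_trans hn1 hnm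
    have hn0 : (0:ℝ) < (n:ℝ) := by exact_mod_cast hn1
    have hNnv : 0 ≤ N n v := N_nonneg hN hn1 v
    have hNm : 0 ≤ N m (coc A n m v) := N_nonneg hN hm1 _
    have hs2 := step2 n hn2 m hnm v
    have hLr : L₀ ≤ Real.log ((m:ℝ)/(n:ℝ)) := by
      refine le_trans hlogr (Real.log_le_log hr0 ?_)
      rw [le_div_iff₀ hn0]
      exact_mod_cast hm
    have hL0pos : 0 < L₀ := by rw [hL₀]; nlinarith
    have e1 : L₀ * N m (coc A n m v) ≤ κ * (C₁ * N n v) :=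
      le_trans (mul_le_mul_of_nonneg_right hLr hNm) hs2
    rw [hL₀] at e1
    nlinarith [e1, hNm, hNnv, hκC₁]
  -- iterate
  have hiter : ∀ j : ℕ, ∀ n, 2 ≤ n → ∀ m, n * r^j ≤ m → ∀ v : X,
      N m (coc A n m v) ≤ C₁ * (1/2:ℝ)^j * N n v := by
    intro j
    induction j with
    | zero =>
        intro n hn2 m hm v
        simpa using step1 n hn2 m (by simpa using hm) v
    | succ j ih =>
        intro n hn2 m hm v
        have hrw : n * r^(j+1) = (n*r) * r^j := by ring
        rw [hrw] at hm
        have hnr2 : 2 ≤ n * r := le_trans hn2 (Nat.le_mul_of_pos_right n (by omega))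
        have hnnr : n ≤ n * r := Nat.le_mul_of_pos_right n (by omega)
        have hnrm : n * r ≤ m := le_trans (Nat.le_mul_of_pos_right _ (Nat.pow_pos (by omega : 0 < r))) hm
        have h1 := ih (n*r) hnr2 m hm (coc A n (n*r) v)
        rw [coc_apply_comp A hnnr hnrm] at h1
        have h2 : N (n*r) (coc A n (n*r) v) ≤ (1/2) * N n v := by
          have := half n hn2 (n*r) (by rw [Nat.mul_comm]) v
          exact this
        calc N m (coc A n m v) ≤ C₁ * (1/2:ℝ)^j * N (n*r) (coc A n (n*r) v) := h1
          _ ≤ C₁ * (1/2:ℝ)^j * ((1/2) * N n v) := by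
              refine mul_le_mul_of_nonneg_left h2 (by positivity)
          _ = C₁ * (1/2:ℝ)^(j+1) * N n v := by ring
  -- final constants
  set lam : ℝ := Real.log 2 / Real.log r with hlam
  have hlam0 : 0 < lam := div_pos (Real.log_pos one_lt_two) hlogr0
  have h2lam : (0:ℝ) < (2:ℝ)^lam := Real.rpow_pos_of_pos two_pos lam
  set D : ℝ := (2*C₁ + 1) * ((M * 2^a) + 1) * ((2:ℝ)^lam + 1) with hD
  have hD0 : 0 < D := by positivity
  refine ⟨D, lam, hD0, hlam0, ?_⟩
  have hMa0 : 0 ≤ M * 2^a := by positivity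
  -- main bound for n ≥ 2
  have hmain2 : ∀ m n, 2 ≤ n → n ≤ m → ∀ v : X,
      N m (coc A n m v) ≤ (2*C₁) * (((m:ℝ)/(n:ℝ)) ^ (-lam)) * N n v := by
    intro m n hn2 hnm v
    have hn1 : 1 ≤ n := by omega
    have hn0 : (0:ℝ) < (n:ℝ) := by exact_mod_cast hn1
    have hm0 : (0:ℝ) < (m:ℝ) := by exact_mod_cast (le_trans hn1 hnm)
    have hq1 : (1:ℝ) ≤ (m:ℝ)/(n:ℝ) := by
      rw [le_div_iff₀ hn0, one_mul]; exact_mod_cast hnm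
    have hq0 : (0:ℝ) < (m:ℝ)/(n:ℝ) := by positivity
    have hNnv : 0 ≤ N n v := N_nonneg hN hn1 v
    set j : ℕ := ⌊Real.logb r ((m:ℝ)/(n:ℝ))⌋₊ with hj
    have hlogb0 : 0 ≤ Real.logb r ((m:ℝ)/(n:ℝ)) := Real.logb_nonneg hr1 hq1
    have hrj : n * r^j ≤ m := by
      have h1 : ((r:ℝ))^(j:ℕ) ≤ (m:ℝ)/(n:ℝ) := by
        rw [← Real.rpow_natCast (r:ℝ) j]
        calc ((r:ℝ))^(j:ℝ) ≤ ((r:ℝ))^(Real.logb r ((m:ℝ)/(n:ℝ))) :=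
              Real.rpow_le_rpow_of_exponent_le hr1.le (Nat.floor_le hlogb0)
          _ = (m:ℝ)/(n:ℝ) := Real.rpow_logb hr0 hr1.ne' hq0
      have h2 : ((n:ℝ)) * ((r:ℝ))^(j:ℕ) ≤ (m:ℝ) := by
        rw [mul_comm]
        exact (le_div_iff₀ hn0).mp h1
      exact_mod_cast h2
    have hhalfpow : ((1/2:ℝ))^j ≤ 2 * (((m:ℝ)/(n:ℝ)) ^ (-lam)) := by
      have hjlt : Real.logb r ((m:ℝ)/(n:ℝ)) < (j:ℝ) + 1 := Nat.lt_floor_add_one _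
      have hlogmn : Real.log ((m:ℝ)/(n:ℝ)) = Real.logb r ((m:ℝ)/(n:ℝ)) * Real.log r := by
        rw [Real.logb, div_mul_cancel₀ _ hlogr0.ne']
      have hexp : ((m:ℝ)/(n:ℝ)) ^ (-lam) = Real.exp (-lam * Real.log ((m:ℝ)/(n:ℝ))) := by
        rw [Real.rpow_def_of_pos hq0, mul_comm]
      have hineq : -(((j:ℝ)+1) * Real.log 2) ≤ -lam * Real.log ((m:ℝ)/(n:ℝ)) := by
        rw [hlogmn, hlam]
        have : Real.log 2 / Real.log r * (Real.logb r ((m:ℝ)/(n:ℝ)) * Real.log r)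
            = Real.logb r ((m:ℝ)/(n:ℝ)) * Real.log 2 := by
          field_simp
        rw [neg_mul, this, neg_le_neg_iff]
        exact mul_le_mul_of_nonneg_right hjlt.le (Real.log_nonneg one_le_two)
      have hexp2 : Real.exp (-(((j:ℝ)+1) * Real.log 2)) = ((1/2:ℝ))^(j+1) := by
        rw [Real.exp_neg]
        rw [show ((j:ℝ)+1) = ((j+1 : ℕ):ℝ) by push_cast; ring]
        rw [Real.exp_nat_mul, Real.exp_log two_pos]
        rw [one_div, inv_pow]
      calc ((1/2:ℝ))^j = 2 * ((1/2:ℝ))^(j+1) := by ring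
        _ = 2 * Real.exp (-(((j:ℝ)+1) * Real.log 2)) := by rw [hexp2]
        _ ≤ 2 * Real.exp (-lam * Real.log ((m:ℝ)/(n:ℝ))) := by
            exact mul_le_mul_of_nonneg_left (Real.exp_le_exp.mpr hineq) (by norm_num)
        _ = 2 * (((m:ℝ)/(n:ℝ)) ^ (-lam)) := by rw [hexp]
    calc N m (coc A n m v) ≤ C₁ * (1/2:ℝ)^j * N n v := hiter j n hn2 m hrj v
      _ ≤ C₁ * (2 * (((m:ℝ)/(n:ℝ)) ^ (-lam))) * N n v := by
          refine mul_le_mul_of_nonneg_right (mul_le_mul_of_nonneg_left hhalfpow hC₁0.le) hNnv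
      _ = (2*C₁) * (((m:ℝ)/(n:ℝ)) ^ (-lam)) * N n v := by ring
  -- final assembly
  intro m n hn1 hnm v
  rcases le_or_gt 2 n with hn2 | hn2
  · have h := hmain2 m n hn2 hnm v
    have hq0 : (0:ℝ) ≤ ((m:ℝ)/(n:ℝ)) ^ (-lam) := Real.rpow_nonneg (by positivity) _
    have hNnv : 0 ≤ N n v := N_nonneg hN hn1 v
    refine le_trans h (mul_le_mul_of_nonneg_right (mul_le_mul_of_nonneg_right ?_ hq0) hNnv)
    rw [hD]
    nlinarith [mul_nonneg hC₁0.le hMa0, mul_nonneg hMa0 h2lam.le, mul_nonneg hC₁0.le h2lam.le, mul_nonneg (mul_nonneg hC₁0.le hMa0) h2lam.le, hC₁0.le, hMa0, h2lam.le]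
  · -- n = 1
    have hn1' : n = 1 := by omega
    subst hn1'
    rcases le_or_gt 2 m with hm2 | hm2
    · have h := hmain2 m 2 le_rfl hm2 (coc A 1 2 v)
      rw [coc_apply_comp A (by omega) hm2] at h
      have hg := hGrow 2 1 le_rfl (by omega) v
      have h2cast : ((2:ℕ):ℝ)/((1:ℕ):ℝ) = 2 := by norm_num
      rw [h2cast] at hg
      have hm0 : (0:ℝ) < (m:ℝ) := by exact_mod_cast (by omega : 0 < m)
      have hNv : 0 ≤ N 1 v := N_nonneg hN le_rfl v
      have hN2 : 0 ≤ N 2 (coc A 1 2 v) := N_nonneg hN (by omega) _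
      have hq2 : (0:ℝ) ≤ ((m:ℝ)/((2:ℕ):ℝ)) ^ (-lam) := Real.rpow_nonneg (by positivity) _
      have hsplit : ((m:ℝ)/((2:ℕ):ℝ)) ^ (-lam)
          = ((m:ℝ)/((1:ℕ):ℝ)) ^ (-lam) * (2:ℝ)^lam := by
        rw [show ((2:ℕ):ℝ) = 2 by norm_num, show ((1:ℕ):ℝ) = 1 by norm_num, div_one]
        rw [Real.div_rpow hm0.le (by norm_num : (0:ℝ) ≤ 2),
          Real.rpow_neg (by norm_num : (0:ℝ) ≤ 2), div_eq_mul_inv, inv_inv]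
      have hq1' : (0:ℝ) ≤ ((m:ℝ)/((1:ℕ):ℝ)) ^ (-lam) := Real.rpow_nonneg (by positivity) _
      calc N m (coc A 1 m v)
          ≤ (2*C₁) * (((m:ℝ)/((2:ℕ):ℝ)) ^ (-lam)) * N 2 (coc A 1 2 v) := h
        _ ≤ (2*C₁) * (((m:ℝ)/((2:ℕ):ℝ)) ^ (-lam)) * (M * 2 ^ a * N 1 v) := by
            refine mul_le_mul_of_nonneg_left hg (by positivity)
        _ = (2*C₁ * (M * 2^a) * (2:ℝ)^lam) * (((m:ℝ)/((1:ℕ):ℝ)) ^ (-lam)) * N 1 v := by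
            rw [hsplit]; ring
        _ ≤ D * (((m:ℝ)/((1:ℕ):ℝ)) ^ (-lam)) * N 1 v := by
            refine mul_le_mul_of_nonneg_right (mul_le_mul_of_nonneg_right ?_ hq1') hNv
            rw [hD]
            nlinarith [mul_nonneg hC₁0.le hMa0, mul_nonneg hMa0 h2lam.le, mul_nonneg hC₁0.le h2lam.le, mul_nonneg (mul_nonneg hC₁0.le hMa0) h2lam.le, hC₁0.le, hMa0, h2lam.le]
    · -- m = 1
      have hm1' : m = 1 := by omega
      subst hm1'
      rw [coc_of_le A le_rfl]
      have hone : ((1:ℕ):ℝ)/((1:ℕ):ℝ) = 1 := by norm_num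
      rw [hone, Real.one_rpow]
      have hNv : 0 ≤ N 1 v := N_nonneg hN le_rfl v
      have hD1 : 1 ≤ D := by
        rw [hD]
        nlinarith [mul_nonneg hC₁0.le hMa0, mul_nonneg hMa0 h2lam.le, mul_nonneg hC₁0.le h2lam.le, mul_nonneg (mul_nonneg hC₁0.le hMa0) h2lam.le, hC₁0.le, hMa0, h2lam.le]
      calc N 1 ((1 : X →L[ℝ] X) v) = N 1 v := by rw [ContinuousLinearMap.one_apply]
        _ ≤ D * 1 * N 1 v := by nlinarith
  
end Endgame

/-- `(A_m)` admits a polynomial contraction with respect to the norms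
`‖·‖_m` (i.e. a polynomial dichotomy with `P_m = Id`:
`‖𝓐(m,n)x‖_m ≤ D(m/n)^{−λ}‖x‖_n` for all `m ≥ n`, `x ∈ X`) if and only if there are
`M, a > 0` with `‖𝓐(m,n)x‖_m ≤ M(m/n)^a‖x‖_n` for `m ≥ n`, and for each `y ∈ Y₀` the
sequence `x_n = ∑_{k=1}^n (1/k)𝓐(n,k)y_k` belongs to `Y₀`. -/
theorem stmt14 [CompleteSpace X] (A : ℕ → X →L[ℝ] X) (N : ℕ → X → ℝ)
    (hN : NormFamily N) :
    (∃ D lam : ℝ, 0 < D ∧ 0 < lam ∧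
      ∀ m n, 1 ≤ n → n ≤ m → ∀ x : X,
        N m (coc A n m x) ≤ D * (((m : ℝ) / (n : ℝ)) ^ (-lam)) * N n x) ↔
    ((∃ M a : ℝ, 0 < M ∧ 0 < a ∧ Grow A N M a) ∧
      ∀ y : ℕ → X, MemY0 N y →
        MemY0 N (fun n => ∑ k ∈ Finset.Icc 1 n, ((k : ℝ))⁻¹ • coc A k n (y k))) := by
  constructor
  · rintro ⟨D, lam, hD, hlam, h⟩
    constructor
    · refine ⟨D, lam, hD, hlam, fun m n h1 h2 x => le_trans (h m n h1 h2 x) ?_⟩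
      have hn0 : (0:ℝ) < (n:ℝ) := by exact_mod_cast h1
      have hq1 : (1:ℝ) ≤ (m:ℝ)/(n:ℝ) := by
        rw [le_div_iff₀ hn0, one_mul]; exact_mod_cast h2
      have hexp : ((m:ℝ)/(n:ℝ)) ^ (-lam) ≤ ((m:ℝ)/(n:ℝ)) ^ lam :=
        Real.rpow_le_rpow_of_exponent_le hq1 (by linarith)
      have hNx : 0 ≤ N n x := N_nonneg hN h1 x
      exact mul_le_mul_of_nonneg_right (mul_le_mul_of_nonneg_left hexp hD.le) hNx
    · rintro y ⟨hy1, S, hS⟩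
      have hS0 : 0 ≤ S := by
        have := hS 1 le_rfl
        rwa [hy1, N_zero hN le_rfl] at this
      set l : ℝ := min lam 1 with hl
      have hl0 : 0 < l := lt_min hlam one_pos
      have hl1 : l ≤ 1 := min_le_right _ _
      have hll : l ≤ lam := min_le_left _ _
      constructor
      · simp [hy1]
      · refine ⟨l⁻¹ * (D * S), fun n hn => ?_⟩
        have hn0 : (0:ℝ) < (n:ℝ) := by exact_mod_cast hn
        calc N n (∑ k ∈ Finset.Icc 1 n, ((k : ℝ))⁻¹ • coc A k n (y k))
            ≤ ∑ k ∈ Finset.Icc 1 n, N n (((k : ℝ))⁻¹ • coc A k n (y k)) :=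
              N_sum hN hn _ _
          _ ≤ ∑ k ∈ Finset.Icc 1 n, ((k:ℝ))⁻¹ * (((n:ℝ)/(k:ℝ)) ^ (-l)) * (D * S) := by
              refine Finset.sum_le_sum (fun k hk => ?_)
              obtain ⟨hk1, hkn⟩ := Finset.mem_Icc.mp hk
              have hk0 : (0:ℝ) < (k:ℝ) := by exact_mod_cast hk1
              have hq1 : (1:ℝ) ≤ (n:ℝ)/(k:ℝ) := by
                rw [le_div_iff₀ hk0, one_mul]; exact_mod_cast hkn
              have hexp : ((n:ℝ)/(k:ℝ)) ^ (-lam) ≤ ((n:ℝ)/(k:ℝ)) ^ (-l) :=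
                Real.rpow_le_rpow_of_exponent_le hq1 (by linarith)
              have hbound : N n (coc A k n (y k)) ≤ D * (((n:ℝ)/(k:ℝ)) ^ (-l)) * S := by
                refine le_trans (h n k hk1 hkn (y k)) ?_
                exact mul_le_mul (mul_le_mul_of_nonneg_left hexp hD.le) (hS k hk1)
                  (N_nonneg hN hk1 _) (by positivity)
              calc N n (((k : ℝ))⁻¹ • coc A k n (y k))
                  = ((k:ℝ))⁻¹ * N n (coc A k n (y k)) := by
                    rw [N_smul hN hn, abs_of_nonneg (by positivity : (0:ℝ) ≤ ((k:ℝ))⁻¹)]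
                _ ≤ ((k:ℝ))⁻¹ * (D * (((n:ℝ)/(k:ℝ)) ^ (-l)) * S) :=
                    mul_le_mul_of_nonneg_left hbound (by positivity)
                _ = ((k:ℝ))⁻¹ * (((n:ℝ)/(k:ℝ)) ^ (-l)) * (D * S) := by ring
          _ = (∑ k ∈ Finset.Icc 1 n, ((k:ℝ))⁻¹ * (((n:ℝ)/(k:ℝ)) ^ (-l))) * (D * S) := by
              rw [← Finset.sum_mul]
          _ ≤ l⁻¹ * (D * S) := by
              refine mul_le_mul_of_nonneg_right
                (sum_inv_div_le hl0 hl1 (sum_rpow_le hl0 hl1) hn) (by positivity)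
  · rintro ⟨⟨M, a, hM, ha, hGrow⟩, hAdm⟩
    have hAdm' : ∀ y : ℕ → X, MemY0 N y → MemY0 N (xseq A y) := fun y hy => hAdm y hy
    obtain ⟨κ, hκ, hkey⟩ := key A hN hAdm'
    exact contraction_of_key A hN M a hM ha hGrow κ hκ hkey
end

section
/- Let X = ℝ with the Euclidean norm and ‖·‖_m the Euclidean norm for all m. Define A_n = n if n is a power of 2 and A_n = 0 otherwise. Then: (i) for every y = (y_n) ∈ Y_0, the sequence x_n = Σ_{k=1}^n (1/k) A(n,k) y_k satisfies sup_n |x_n| ≤ 2 sup_n |y_n| (so x ∈ Y_0); but (ii) (A_n) does not admit a polynomial contraction, since sup_n |A_n| = ∞. -/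
open scoped BigOperators

open Classical in
/-- The scalar sequence `A_n = n` if `n` is a power of `2` (with positive exponent),
`A_n = 0` otherwise. -/
noncomputable def exA (n : ℕ) : ℝ := if ∃ l : ℕ, 1 ≤ l ∧ n = 2 ^ l then (n : ℝ) else 0

/-- The associated scalar cocycle `𝓐(m,n) = A_{m-1} ⋯ A_n` for `m ≥ n`, `𝓐(n,n) = 1`. -/
noncomputable def exCoc (n m : ℕ) : ℝ := ∏ j ∈ Finset.Ico n m, exA j

lemma exA_odd_eq_zero (j : ℕ) (h : Odd j) : exA j = 0 := by
  unfold exA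
  rw [if_neg]
  rintro ⟨l, hl, rfl⟩
  have : Even (2 ^ l) := (Nat.even_pow).mpr ⟨even_two, by omega⟩
  exact (Nat.not_even_iff_odd.mpr h) this

lemma exA_abs_le (m : ℕ) : |exA m| ≤ (m : ℝ) := by
  unfold exA
  split_ifs with h
  · rw [abs_of_nonneg (by positivity)]
  · simp

lemma exCoc_self (n : ℕ) : exCoc n n = 1 := by simp [exCoc]

lemma exCoc_succ (n : ℕ) : exCoc n (n + 1) = exA n := by
  simp [exCoc, Finset.prod_Ico_succ_top (le_refl n)]

lemma exCoc_zero (k n : ℕ) (h : k + 2 ≤ n) : exCoc k n = 0 := by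
  rcases Nat.even_or_odd k with hk | hk
  · exact Finset.prod_eq_zero (Finset.mem_Ico.mpr ⟨by omega, by omega⟩)
      (exA_odd_eq_zero (k + 1) (Even.add_one hk))
  · exact Finset.prod_eq_zero (Finset.mem_Ico.mpr ⟨le_refl k, by omega⟩)
      (exA_odd_eq_zero k hk)

/-- For `X = ℝ` with the Euclidean norm (all norms `‖·‖_m` equal to it) and
`A_n` as above: (i) for every sequence `y ∈ Y₀` (i.e. `y 1 = 0`, `|y_n| ≤ K`), the sequence
`x_n = ∑_{k=1}^n (1/k) 𝓐(n,k) y_k` satisfies `|x_n| ≤ 2K` for all `n ≥ 1` (so `x ∈ Y₀`);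
but (ii) `(A_n)` does not admit a polynomial contraction, and indeed `sup_n |A_n| = ∞`. -/
theorem stmt16 :
    (∀ (y : ℕ → ℝ) (K : ℝ), y 1 = 0 → (∀ n, 1 ≤ n → |y n| ≤ K) →
      ∀ n, 1 ≤ n →
        |∑ k ∈ Finset.Icc 1 n, exCoc k n * y k * (1 / (k : ℝ))| ≤ 2 * K) ∧
    ¬ (∃ D lam : ℝ, 0 < D ∧ 0 < lam ∧
        ∀ m n : ℕ, 1 ≤ n → n ≤ m → ∀ x : ℝ,
          |exCoc n m * x| ≤ D * (((m : ℝ) / (n : ℝ)) ^ (-lam)) * |x|) ∧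
    ¬ (∃ C : ℝ, ∀ n, 1 ≤ n → |exA n| ≤ C) := by
  refine ⟨?_, ?_, ?_⟩
  · intro y K hy1 hK n hn
    have hK0 : 0 ≤ K := le_trans (abs_nonneg _) (hK 1 le_rfl)
    rcases Nat.lt_or_ge n 2 with h2 | h2
    · interval_cases n
      simp [exCoc_self, hy1]
      linarith
    · obtain ⟨p, rfl⟩ : ∃ p, n = p + 2 := ⟨n - 2, by omega⟩
      set f : ℕ → ℝ := fun k => exCoc k (p + 2) * y k * (1 / (k : ℝ)) with hf
      have hsub : Finset.Icc (p + 1) (p + 2) ⊆ Finset.Icc 1 (p + 2) := by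
        intro x hx
        simp only [Finset.mem_Icc] at *
        omega
      have hzero : ∀ x ∈ Finset.Icc 1 (p + 2), x ∉ Finset.Icc (p + 1) (p + 2) → f x = 0 := by
        intro x hx hx'
        simp only [Finset.mem_Icc] at hx hx'
        have : x + 2 ≤ p + 2 := by omega
        simp [hf, exCoc_zero x (p + 2) this]
      rw [← Finset.sum_subset hsub hzero]
      have hsum : ∑ k ∈ Finset.Icc (p + 1) (p + 2), f k = f (p + 1) + f (p + 2) := by
        rw [show p + 2 = (p + 1) + 1 from rfl, Finset.sum_Icc_succ_top (by omega)]
        simp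
      rw [hsum]
      have hb2 : |f (p + 2)| ≤ K := by
        have hfe : f (p + 2) = y (p + 2) * (1 / ((p + 2 : ℕ) : ℝ)) := by
          simp [hf, exCoc_self]
        have hpos : (0:ℝ) < ((p + 2 : ℕ) : ℝ) := by
          exact_mod_cast Nat.succ_pos (p + 1)
        rw [hfe, abs_mul]
        have h1 : |(1 : ℝ) / ((p + 2 : ℕ) : ℝ)| ≤ 1 := by
          rw [abs_of_nonneg (one_div_nonneg.mpr hpos.le), div_le_one hpos]
          push_cast
          linarith [Nat.cast_nonneg (α := ℝ) p]
        calc |y (p + 2)| * |(1:ℝ) / ((p + 2 : ℕ) : ℝ)| ≤ K * 1 :=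
              mul_le_mul (hK _ (by omega)) h1 (abs_nonneg _) hK0
          _ = K := mul_one K
      have hb1 : |f (p + 1)| ≤ K := by
        have hco : exCoc (p + 1) (p + 2) = exA (p + 1) := exCoc_succ (p + 1)
        have hfe : f (p + 1) = exA (p + 1) * y (p + 1) * (1 / ((p + 1 : ℕ) : ℝ)) := by
          rw [hf]; simp only [hco]
        have hpos : (0:ℝ) < ((p + 1 : ℕ) : ℝ) := Nat.cast_pos.mpr (by omega)
        rw [hfe, abs_mul, abs_mul]
        have h1 : |exA (p + 1)| * |(1 : ℝ) / ((p + 1 : ℕ) : ℝ)| ≤ 1 := by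
          have ha := exA_abs_le (p + 1)
          rw [abs_of_nonneg (one_div_nonneg.mpr hpos.le), mul_one_div, div_le_one hpos]
          exact ha
        calc |exA (p + 1)| * |y (p + 1)| * |(1 : ℝ) / ((p + 1 : ℕ) : ℝ)|
            = |y (p + 1)| * (|exA (p + 1)| * |(1 : ℝ) / ((p + 1 : ℕ) : ℝ)|) := by ring
          _ ≤ K * 1 := mul_le_mul (hK _ (by omega)) h1 (by positivity) hK0
          _ = K := mul_one K
      calc |f (p + 1) + f (p + 2)| ≤ |f (p + 1)| + |f (p + 2)| := abs_add_le _ _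
        _ ≤ K + K := add_le_add hb1 hb2
        _ = 2 * K := by ring
  · rintro ⟨D, lam, hD, hlam, h⟩
    obtain ⟨N, hN⟩ := exists_nat_gt D
    set n := 2 ^ (N + 1) with hn
    have hn1 : 1 ≤ n := Nat.one_le_two_pow
    have := h (n + 1) n hn1 (Nat.le_succ n) 1
    rw [exCoc_succ] at this
    have hA : exA n = (n : ℝ) := by
      unfold exA
      rw [if_pos ⟨N + 1, by omega, rfl⟩]
    rw [hA] at this
    simp only [mul_one, abs_one] at this
    rw [abs_of_nonneg (by positivity)] at this
    have hr : (((n : ℝ) + 1) / (n : ℝ)) ^ (-lam) ≤ 1 := by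
      apply Real.rpow_le_one_of_one_le_of_nonpos
      · rw [le_div_iff₀ (by positivity)]
        linarith
      · linarith
    have hnn : (0:ℝ) ≤ (n:ℝ) + 1 := by positivity
    push_cast at this
    have hDn : (n : ℝ) ≤ D := by
      calc (n : ℝ) ≤ D * (((n : ℝ) + 1) / (n : ℝ)) ^ (-lam) := this
        _ ≤ D * 1 := by
            apply mul_le_mul_of_nonneg_left hr (le_of_lt hD)
        _ = D := mul_one D
    have hbig : D < (n : ℝ) := by
      have h1 : (N : ℝ) < (2 : ℝ) ^ (N + 1) := by
        have := Nat.lt_two_pow_self (n := N)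
        have h2 : (2:ℕ) ^ N ≤ 2 ^ (N + 1) := Nat.pow_le_pow_right (by norm_num) (Nat.le_succ N)
        have : (N : ℝ) < ((2 ^ (N + 1) : ℕ) : ℝ) := by exact_mod_cast lt_of_lt_of_le this h2
        push_cast at this
        linarith
      have : (n : ℝ) = (2 : ℝ) ^ (N + 1) := by rw [hn]; push_cast; ring
      rw [this]
      linarith
    linarith
  · rintro ⟨C, h⟩
    obtain ⟨N, hN⟩ := exists_nat_gt C
    set n := 2 ^ (N + 1) with hn
    have hn1 : 1 ≤ n := Nat.one_le_two_pow
    have hA : exA n = (n : ℝ) := by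
      unfold exA
      rw [if_pos ⟨N + 1, by omega, rfl⟩]
    have := h n hn1
    rw [hA, abs_of_nonneg (by positivity)] at this
    have hbig : C < (n : ℝ) := by
      have h1 := Nat.lt_two_pow_self (n := N)
      have h2 : (2:ℕ) ^ N ≤ 2 ^ (N + 1) := Nat.pow_le_pow_right (by norm_num) (Nat.le_succ N)
      have h3 : (N : ℝ) < (n : ℝ) := by exact_mod_cast lt_of_lt_of_le h1 h2
      linarith
    linarith
end
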